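/- arXiv:1212.5945 — 6 statements merged into one kernel-verified Lean document; each statement's English description precedes it below -/
import Mathlib

section
/- Let H be a real Hilbert space, D ⊆ H a convex set with nonempty interior, and f : H → ℝ a lower-semicontinuous function that is strictly convex and totally convex on D and Gâteaux differentiable on the interior of D with Gâteaux gradient g. Let p ≥ 2 and let A_1, …, A_p (indices taken modulo p) be nonempty, bounded, closed, convex subsets of the interior of D, and let T : ∪_i A_i → ∪_i A_i satisfy T(A_i) ⊆ A_{i+1} for each i. Assume T is a generalized point-dependent (K,λ)-hybrid p-cyclic self-mapping relative to the Bregman distance D_f, with λ bounded and with K̂(y) := ∏_{j=i}^{i+p−1} K_j(T^{j−i} y) < 1 for every y ∈ A_{i+1} and every i. Assume moreover that for some x₀ ∈ ∪_i A_i the sequence of iterates (Tⁿ x₀) converges in norm to some z ∈ ∩_i A_i. Then z = Tz, z is the unique fixed point of T, and for every x ∈ ∪_i A_i the sequence (Tⁿ x) converges in norm to z. -/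
open Topology Filter

/-- Geometric decay along windows of length `p` forces convergence to zero. -/
lemma aux_contract (d : ℕ → ℝ) (p : ℕ) (hp : 0 < p) (κ : ℝ) (hκ0 : 0 ≤ κ) (hκ1 : κ < 1)
    (h0 : ∀ n, 0 ≤ d n) (hrec : ∀ n, d (n + p) ≤ κ * d n) :
    Tendsto d atTop (𝓝 0) := by
  have hq : ∀ q r, d (q * p + r) ≤ κ ^ q * d r := by
    intro q
    induction q with
    | zero => intro r; simp
    | succ q ih =>
        intro r
        have h1 : (q + 1) * p + r = (q * p + r) + p := by ring
        calc d ((q + 1) * p + r) = d ((q * p + r) + p) := by rw [h1]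
          _ ≤ κ * d (q * p + r) := hrec _
          _ ≤ κ * (κ ^ q * d r) := mul_le_mul_of_nonneg_left (ih r) hκ0
          _ = κ ^ (q + 1) * d r := by ring
  have hne : (Finset.range p).Nonempty := Finset.nonempty_range_iff.mpr (by omega)
  set M := (Finset.range p).sup' hne d with hM
  have hM0 : 0 ≤ M := le_trans (h0 0) (Finset.le_sup' d (Finset.mem_range.mpr hp))
  rw [Metric.tendsto_atTop]
  intro ε hε
  have hpow : Tendsto (fun q : ℕ => κ ^ q * M) atTop (𝓝 0) := by
    have := (tendsto_pow_atTop_nhds_zero_of_lt_one hκ0 hκ1).mul_const M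
    simpa using this
  obtain ⟨Q, hQ⟩ := (hpow.eventually_lt_const hε).exists
  refine ⟨Q * p, fun n hn => ?_⟩
  have hr : n % p < p := Nat.mod_lt _ hp
  have hQle : Q ≤ n / p := (Nat.le_div_iff_mul_le hp).mpr hn
  have hc : dist (d n) 0 = d n := by rw [Real.dist_eq, sub_zero, abs_of_nonneg (h0 n)]
  rw [hc]
  calc d n = d (n / p * p + n % p) := by rw [mul_comm, Nat.div_add_mod]
    _ ≤ κ ^ (n / p) * d (n % p) := hq _ _
    _ ≤ κ ^ (n / p) * M :=
        mul_le_mul_of_nonneg_left (Finset.le_sup' d (Finset.mem_range.mpr hr)) (pow_nonneg hκ0 _)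
    _ ≤ κ ^ Q * M := mul_le_mul_of_nonneg_right (pow_le_pow_of_le_one hκ0 hκ1.le hQle) hM0
    _ < ε := hQ

set_option maxHeartbeats 1000000 in
/-- A convex (on `D`), lower-semicontinuous function on a complete normed space is
upper semicontinuous at interior points of `D`. -/
lemma aux_usc {H : Type*} [NormedAddCommGroup H] [NormedSpace ℝ H] [CompleteSpace H]
    (D : Set H) (f : H → ℝ) (hf : ConvexOn ℝ D f) (hlsc : LowerSemicontinuous f)
    (z : H) (hz : z ∈ interior D) :
    ∀ ε : ℝ, 0 < ε → ∃ δ : ℝ, 0 < δ ∧ ∀ w : H, dist w z < δ → f w ≤ f z + ε := by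
  -- Step 0: a closed ball around `z` inside `interior D`
  obtain ⟨ρA, hρA, hρAsub⟩ := Metric.isOpen_iff.mp isOpen_interior z hz
  set r₀ : ℝ := ρA / 2 with hr₀
  have hr₀pos : 0 < r₀ := by positivity
  have hB : Metric.closedBall z r₀ ⊆ interior D :=
    (Metric.closedBall_subset_ball (by linarith)).trans hρAsub
  have hBD : Metric.closedBall z r₀ ⊆ D := hB.trans interior_subset
  -- Step 1 (Baire): f is bounded above on some small ball inside the closed ball
  have key : ∃ c₀ : H, ∃ ρ : ℝ, ∃ C₀ : ℝ, 0 < ρ ∧ Metric.ball c₀ ρ ⊆ Metric.closedBall z r₀ ∧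
      ∀ v ∈ Metric.ball c₀ ρ, f v ≤ C₀ := by
    haveI : CompleteSpace (Metric.closedBall z r₀) :=
      Metric.isClosed_closedBall.completeSpace_coe
    haveI : Nonempty (Metric.closedBall z r₀) :=
      ⟨⟨z, Metric.mem_closedBall_self hr₀pos.le⟩⟩
    have hclosed : ∀ n : ℕ, IsClosed {x : Metric.closedBall z r₀ | f x.1 ≤ (n : ℝ)} := by
      intro n
      exact (hlsc.isClosed_preimage (n : ℝ)).preimage continuous_subtype_val
    have hunion : (⋃ n : ℕ, {x : Metric.closedBall z r₀ | f x.1 ≤ (n : ℝ)}) = Set.univ := by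
      ext x
      simp only [Set.mem_iUnion, Set.mem_setOf_eq, Set.mem_univ, iff_true]
      exact ⟨⌈f x.1⌉₊, Nat.le_ceil _⟩
    obtain ⟨n₀, x, hx⟩ := nonempty_interior_of_iUnion_of_closed hclosed hunion
    rw [mem_interior_iff_mem_nhds, Metric.mem_nhds_iff] at hx
    obtain ⟨ε, hεpos, hεsub⟩ := hx
    have hxball : dist x.1 z ≤ r₀ := x.2
    -- move slightly towards z to get an ambient ball
    set τ : ℝ := min (1/2 : ℝ) (ε / (2 * (r₀ + 1))) with hτ
    have hτpos : 0 < τ := lt_min (by norm_num) (by positivity)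
    have hτhalf : τ ≤ 1/2 := min_le_left _ _
    have hτε : τ * r₀ < ε / 2 := by
      have h1 : τ ≤ ε / (2 * (r₀ + 1)) := min_le_right _ _
      have h2 : τ * r₀ ≤ ε / (2 * (r₀ + 1)) * r₀ :=
        mul_le_mul_of_nonneg_right h1 hr₀pos.le
      have h3 : ε / (2 * (r₀ + 1)) * r₀ < ε / 2 := by
        rw [div_mul_eq_mul_div, div_lt_div_iff₀ (by positivity) (by norm_num)]
        nlinarith
      linarith
    set c₀ : H := x.1 + τ • (z - x.1) with hc₀
    set ρ : ℝ := min (τ * r₀) (ε / 2) with hρ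
    have hρpos : 0 < ρ := lt_min (by positivity) (by positivity)
    have hdcz : dist c₀ z ≤ (1 - τ) * r₀ := by
      have : c₀ - z = (1 - τ) • (x.1 - z) := by rw [hc₀]; module
      rw [dist_eq_norm, this, norm_smul, Real.norm_eq_abs, abs_of_nonneg (by linarith)]
      have := hxball
      rw [dist_eq_norm] at this
      nlinarith
    have hdcx : dist c₀ x.1 ≤ τ * r₀ := by
      have : c₀ - x.1 = τ • (z - x.1) := by rw [hc₀]; module
      rw [dist_eq_norm, this, norm_smul, Real.norm_eq_abs, abs_of_pos hτpos]
      have hzx : ‖z - x.1‖ ≤ r₀ := by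
        rw [← dist_eq_norm, dist_comm]; exact hxball
      nlinarith
    refine ⟨c₀, ρ, (n₀ : ℝ), hρpos, ?_, ?_⟩
    · intro v hv
      rw [Metric.mem_ball] at hv
      rw [Metric.mem_closedBall]
      calc dist v z ≤ dist v c₀ + dist c₀ z := dist_triangle _ _ _
        _ ≤ ρ + (1 - τ) * r₀ := by linarith [hv.le, hdcz]
        _ ≤ τ * r₀ + (1 - τ) * r₀ := by linarith [min_le_left (τ * r₀) (ε / 2)]
        _ = r₀ := by ring
    · intro v hv
      rw [Metric.mem_ball] at hv
      have hvz : v ∈ Metric.closedBall z r₀ := by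
        rw [Metric.mem_closedBall]
        calc dist v z ≤ dist v c₀ + dist c₀ z := dist_triangle _ _ _
          _ ≤ ρ + (1 - τ) * r₀ := by linarith [hv.le, hdcz]
          _ ≤ τ * r₀ + (1 - τ) * r₀ := by linarith [min_le_left (τ * r₀) (ε / 2)]
          _ = r₀ := by ring
      have hvx : dist v x.1 < ε := by
        calc dist v x.1 ≤ dist v c₀ + dist c₀ x.1 := dist_triangle _ _ _
          _ < ρ + τ * r₀ := by linarith [hdcx]
          _ < ε := by
              have := min_le_right (τ * r₀) (ε / 2)
              linarith
      have : (⟨v, hvz⟩ : Metric.closedBall z r₀) ∈ Metric.ball x ε := by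
        rw [Metric.mem_ball, Subtype.dist_eq]
        exact hvx
      exact hεsub this
  obtain ⟨c₀, ρ, C₀, hρpos, hballsub, hbound⟩ := key
  have hballD : Metric.ball c₀ ρ ⊆ D := hballsub.trans hBD
  -- Step 2: f is bounded above on a ball centered at z
  have key2 : ∃ r₁ : ℝ, ∃ C : ℝ, 0 < r₁ ∧ Metric.ball z r₁ ⊆ D ∧
      ∀ w ∈ Metric.ball z r₁, f w ≤ C := by
    by_cases hcz : c₀ = z
    · exact ⟨ρ, C₀, hρpos, by rw [← hcz]; exact hballD,
        fun w hw => hbound w (by rwa [hcz])⟩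
    · have hs : 0 < ‖z - c₀‖ := by
        rw [norm_sub_pos_iff]; exact fun h => hcz h.symm
      set s : ℝ := ‖z - c₀‖ with hsdef
      set θ : ℝ := min 1 (ρA / (2 * s)) with hθ
      have hθpos : 0 < θ := lt_min one_pos (by positivity)
      set y' : H := z + θ • (z - c₀) with hy'
      have hy'D : y' ∈ D := by
        apply interior_subset
        apply hρAsub
        rw [Metric.mem_ball, dist_eq_norm]
        have he : y' - z = θ • (z - c₀) := by rw [hy']; module
        rw [he, norm_smul, Real.norm_eq_abs, abs_of_pos hθpos]
        have h1 : θ ≤ ρA / (2 * s) := min_le_right _ _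
        have h2 : θ * s ≤ ρA / (2 * s) * s := mul_le_mul_of_nonneg_right h1 hs.le
        have h3 : ρA / (2 * s) * s = ρA / 2 := by field_simp
        rw [← hsdef]
        linarith
      set β : ℝ := 1 / (1 + θ) with hβ
      have h1θ : 0 < 1 + θ := by linarith
      have hβpos : 0 < β := by positivity
      set α : ℝ := 1 - β with hα
      have hαβθ : α = β * θ := by
        rw [hα, hβ]; field_simp; ring
      have hαpos : 0 < α := by
        rw [hαβθ]; positivity
      have hβle : β ≤ 1 := by
        rw [hβ, div_le_one h1θ]; linarith
      have hαle : α ≤ 1 := by rw [hα]; linarith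
      refine ⟨min (α * ρ) ρA, |C₀| + |f y'|, lt_min (by positivity) hρA, ?_, ?_⟩
      · exact (Metric.ball_subset_ball (min_le_right _ _)).trans
          (hρAsub.trans interior_subset)
      · intro w hw
        rw [Metric.mem_ball, dist_eq_norm] at hw
        have hwαρ : ‖w - z‖ < α * ρ := lt_of_lt_of_le hw (min_le_left _ _)
        set u : H := c₀ + α⁻¹ • (w - z) with hu
        have huball : u ∈ Metric.ball c₀ ρ := by
          rw [Metric.mem_ball, dist_eq_norm]
          have he : u - c₀ = α⁻¹ • (w - z) := by rw [hu]; module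
          rw [he, norm_smul, Real.norm_eq_abs, abs_of_pos (by positivity : (0:ℝ) < α⁻¹)]
          calc α⁻¹ * ‖w - z‖ < α⁻¹ * (α * ρ) :=
                mul_lt_mul_of_pos_left hwαρ (by positivity)
            _ = ρ := by field_simp
        have h1 : α • u = α • c₀ + (w - z) := by
          rw [hu, smul_add, smul_inv_smul₀ hαpos.ne']
        have hz_eq : α • c₀ + β • (z + θ • (z - c₀)) = z := by
          have hβθ1 : β + β * θ = 1 := by rw [hβ]; field_simp
          rw [hαβθ]
          have hm : (β * θ) • c₀ + β • (z + θ • (z - c₀)) = (β + β * θ) • z := by module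
          rw [hm, hβθ1, one_smul]
        have hw_eq : α • u + β • y' = w := by
          calc α • u + β • y' = (α • c₀ + β • (z + θ • (z - c₀))) + (w - z) := by
                rw [h1, hy']; abel
            _ = z + (w - z) := by rw [hz_eq]
            _ = w := by abel
        have hcvx := hf.2 (hballD huball) hy'D hαpos.le hβpos.le (by rw [hα]; ring)
        rw [hw_eq] at hcvx
        simp only [smul_eq_mul] at hcvx
        have h2 : f u ≤ C₀ := hbound u huball
        have h3 : α * f u ≤ |C₀| := by nlinarith [le_abs_self C₀, abs_nonneg C₀]
        have h4 : β * f y' ≤ |f y'| := by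
          nlinarith [le_abs_self (f y'), abs_nonneg (f y')]
        linarith
  -- Step 3: upper semicontinuity at z
  obtain ⟨r₁, C, hr₁, hr₁D, hC⟩ := key2
  intro ε hε
  set Q : ℝ := |C - f z| with hQdef
  have hQ0 : 0 ≤ Q := abs_nonneg _
  refine ⟨min (r₁ / 2) (r₁ * ε / (4 * (Q + 1))), lt_min (by positivity) (by positivity),
    fun w hw => ?_⟩
  by_cases hwz : w = z
  · rw [hwz]; linarith
  · rw [dist_eq_norm] at hw
    have hs : 0 < ‖w - z‖ := by
      rw [norm_sub_pos_iff]; exact fun h => hwz h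
    set s : ℝ := ‖w - z‖ with hsdef
    have hs0 : s ≠ 0 := ne_of_gt hs
    have hr0 : r₁ ≠ 0 := ne_of_gt hr₁
    have hsδ1 : s < r₁ / 2 := lt_of_lt_of_le hw (min_le_left _ _)
    have hsδ2 : s < r₁ * ε / (4 * (Q + 1)) := lt_of_lt_of_le hw (min_le_right _ _)
    set yw : H := z + (r₁ / (2 * s)) • (w - z) with hyw
    have hywball : yw ∈ Metric.ball z r₁ := by
      rw [Metric.mem_ball, dist_eq_norm]
      have he : yw - z = (r₁ / (2 * s)) • (w - z) := by rw [hyw]; module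
      rw [he, norm_smul, Real.norm_eq_abs, abs_of_pos (by positivity : (0:ℝ) < r₁ / (2 * s))]
      rw [← hsdef]
      have hee : r₁ / (2 * s) * s = r₁ / 2 := by field_simp
      rw [hee]
      linarith
    have hywD : yw ∈ D := hr₁D hywball
    have hfyw : f yw ≤ C := hC yw hywball
    set t : ℝ := 2 * s / r₁ with ht
    have ht0 : 0 < t := by positivity
    have ht1 : t < 1 := by
      rw [ht, div_lt_one hr₁]; linarith
    have hcoeff : t * (r₁ / (2 * s)) = 1 := by
      rw [ht]; field_simp
    have hw_eq : (1 - t) • z + t • yw = w := by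
      have h1 : t • ((r₁ / (2 * s)) • (w - z)) = w - z := by
        rw [smul_smul, hcoeff, one_smul]
      have hzz : (1 - t) • z + t • z = z := by
        rw [← add_smul, sub_add_cancel, one_smul]
      calc (1 - t) • z + t • yw
          = ((1 - t) • z + t • z) + t • ((r₁ / (2 * s)) • (w - z)) := by
            rw [hyw, smul_add]; abel
        _ = z + (w - z) := by rw [hzz, h1]
        _ = w := by abel
    have hcvx := hf.2 (interior_subset hz) hywD (by linarith : (0:ℝ) ≤ 1 - t) ht0.le
      (by ring : (1 - t) + t = 1)
    rw [hw_eq] at hcvx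
    simp only [smul_eq_mul] at hcvx
    have h5 : f w ≤ f z + t * (C - f z) := by nlinarith
    have hsδ2' : s * (4 * (Q + 1)) < r₁ * ε := by
      rw [lt_div_iff₀ (by positivity : (0:ℝ) < 4 * (Q + 1))] at hsδ2
      exact hsδ2
    have ht2 : t < ε / (2 * (Q + 1)) := by
      rw [ht, div_lt_div_iff₀ hr₁ (by positivity : (0:ℝ) < 2 * (Q + 1))]
      nlinarith
    have h6 : t * (C - f z) ≤ ε / 2 := by
      have h7 : t * (C - f z) ≤ t * Q := by
        have := le_abs_self (C - f z)
        nlinarith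
      have h8 : t * Q ≤ (ε / (2 * (Q + 1))) * Q := by nlinarith
      have h9 : (ε / (2 * (Q + 1))) * Q ≤ ε / 2 := by
        rw [div_mul_eq_mul_div, div_le_div_iff₀ (by positivity : (0:ℝ) < 2 * (Q + 1)) (by norm_num : (0:ℝ) < 2)]
        nlinarith
      linarith
    linarith


set_option maxHeartbeats 1000000 in
/-- Theorem 2.3: a generalized point-dependent `(K,λ)`-hybrid `p`-cyclic self-mapping relative to
the Bregman distance of a lower-semicontinuous, strictly and totally convex, Gâteaux
differentiable function, on intersecting nonempty bounded closed convex subsets, with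
`K̂(y) < 1`, `λ` bounded and one norm-convergent orbit, has the limit `z` as its unique fixed
point and all orbits converge in norm to `z`. -/
theorem hybrid_cyclic_unique_fixed_point
    {H : Type*} [NormedAddCommGroup H] [InnerProductSpace ℝ H] [CompleteSpace H]
    (D : Set H) (hD : Convex ℝ D) (hDint : (interior D).Nonempty)
    (f : H → ℝ) (g : H → H)
    (hlsc : LowerSemicontinuous f)
    (hsc : StrictConvexOn ℝ D f)
    (hgat : ∀ x ∈ interior D, ∀ v : H,
      Tendsto (fun t : ℝ => (f (x + t • v) - f x) / t) (𝓝[≠] (0 : ℝ))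
        (𝓝 (inner ℝ v (g x) : ℝ)))
    (Df : H → H → ℝ)
    (hDf : ∀ y x : H, Df y x = f y - f x - inner ℝ (y - x) (g x))
    -- total convexity: the modulus of total convexity is positive for `t > 0`
    (htc : ∀ x ∈ D, ∀ t : ℝ, 0 < t → ∃ c : ℝ, 0 < c ∧ ∀ y ∈ D, ‖y - x‖ = t → c ≤ Df x y)
    (p : ℕ) (hp : 2 ≤ p)
    (A : ZMod p → Set H)
    (hAne : ∀ i, (A i).Nonempty)
    (hAbd : ∀ i, Bornology.IsBounded (A i))
    (hAcl : ∀ i, IsClosed (A i))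
    (hAcx : ∀ i, Convex ℝ (A i))
    (hAD : ∀ i, A i ⊆ interior D)
    (T : H → H)
    (hT : ∀ i, Set.MapsTo T (A i) (A (i + 1)))
    (K : ZMod p → H → ℝ) (lam : H → ℝ)
    (hKpos : ∀ i, ∀ y ∈ A (i + 1), 0 < K i y)
    (hKbdd : ∀ i, ∃ a : ℝ, ∀ y ∈ A (i + 1), K i y ≤ a)
    (hlam : ∃ M : ℝ, ∀ y ∈ ⋃ i, A i, |lam y| ≤ M)
    (hhyb : ∀ i, ∀ x ∈ A i, ∀ y ∈ A (i + 1),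
      Df (T x) (T y) ≤ K i y * Df x y
        + lam y * inner ℝ (x - T x) (g y - g (T y)))
    (hKhat : ∀ i : ZMod p, ∀ y ∈ A (i + 1),
      (∏ m ∈ Finset.range p, K (i + (m : ZMod p)) (T^[m] y)) < 1)
    (x₀ : H) (hx₀ : x₀ ∈ ⋃ i, A i)
    (z : H) (hz : z ∈ ⋂ i, A i)
    (hconv : Tendsto (fun n => T^[n] x₀) atTop (𝓝 z)) :
    T z = z ∧ (∀ w ∈ ⋃ i, A i, T w = w → w = z) ∧
      ∀ x ∈ ⋃ i, A i, Tendsto (fun n => T^[n] x) atTop (𝓝 z) := by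
  haveI : NeZero p := ⟨by omega⟩
  have hzA : ∀ i, z ∈ A i := fun i => Set.mem_iInter.mp hz i
  have hzI : z ∈ interior D := hAD 0 (hzA 0)
  have hzD : z ∈ D := interior_subset hzI
  have hTzA : ∀ i, T z ∈ A i := fun i => by
    have h := hT (i - 1) (hzA (i - 1))
    simpa using h
  have hTzI : T z ∈ interior D := hAD 0 (hTzA 0)
  -- three-point identity and symmetric identity
  have tp : ∀ x w y : H, Df x y = Df x w + Df w y + (inner ℝ (x - w) (g w - g y) : ℝ) := by
    intro x w y
    simp only [hDf, inner_sub_left, inner_sub_right]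
    ring
  have tp2 : ∀ a b : H, Df a b + Df b a = (inner ℝ (a - b) (g a - g b) : ℝ) := by
    intro a b
    simp only [hDf, inner_sub_left, inner_sub_right]
    ring
  -- gradient inequality: Bregman distances are nonnegative
  have grad : ∀ z' ∈ interior D, ∀ w ∈ D, 0 ≤ Df w z' := by
    intro z' hz' w hw
    rcases eq_or_ne w z' with h | h
    · rw [hDf, h]; simp
    · have hlim := hgat z' hz' (w - z')
      have hmono : 𝓝[Set.Ioo (0:ℝ) 1] (0:ℝ) ≤ 𝓝[≠] (0:ℝ) :=
        nhdsWithin_mono _ (fun t ht => ne_of_gt ht.1)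
      have hnb : (𝓝[Set.Ioo (0:ℝ) 1] (0:ℝ)).NeBot := by
        rw [← mem_closure_iff_nhdsWithin_neBot, closure_Ioo (by norm_num : (0:ℝ) ≠ 1)]
        exact ⟨le_refl 0, zero_le_one⟩
      have hlim' : Tendsto (fun t : ℝ => (f (z' + t • (w - z')) - f z') / t)
          (𝓝[Set.Ioo (0:ℝ) 1] (0:ℝ)) (𝓝 (inner ℝ (w - z') (g z') : ℝ)) := hlim.mono_left hmono
      have hbound : ∀ᶠ t in 𝓝[Set.Ioo (0:ℝ) 1] (0:ℝ),
          (f (z' + t • (w - z')) - f z') / t ≤ f w - f z' := by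
        filter_upwards [self_mem_nhdsWithin] with t htm
        obtain ⟨ht0, ht1⟩ := htm
        have hrepr : z' + t • (w - z') = (1 - t) • z' + t • w := by module
        have hcx := (hsc.convexOn).2 (interior_subset hz') hw
          (by linarith : (0:ℝ) ≤ 1 - t) ht0.le (by ring : (1 - t) + t = 1)
        simp only [smul_eq_mul] at hcx
        rw [hrepr, div_le_iff₀ ht0]
        nlinarith
      have hle := le_of_tendsto hlim' hbound
      rw [hDf]
      linarith
  -- key lower bound via total convexity
  have lower : ∀ z' ∈ interior D, ∀ ε : ℝ, 0 < ε → ∃ c : ℝ, 0 < c ∧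
      ∀ w ∈ interior D, ε ≤ ‖w - z'‖ → c ≤ Df w z' := by
    intro z' hz' ε hε
    obtain ⟨c, hc, hcall⟩ := htc z' (interior_subset hz') (ε / 2) (by linarith)
    refine ⟨c, hc, fun w hw hwd => ?_⟩
    have hwD : w ∈ D := interior_subset hw
    set m : H := z' + (2:ℝ)⁻¹ • (w - z') with hm
    have hmI : m ∈ interior D := by
      have hrepr : m = (2:ℝ)⁻¹ • z' + (2:ℝ)⁻¹ • w := by rw [hm]; module
      rw [hrepr]
      exact hD.interior hz' hw (by norm_num) (by norm_num) (by norm_num)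
    have hmnorm : ‖m - z'‖ = ‖w - z'‖ / 2 := by
      have he : m - z' = (2:ℝ)⁻¹ • (w - z') := by rw [hm]; module
      rw [he, norm_smul, Real.norm_eq_abs, abs_of_pos (by norm_num : (0:ℝ) < 2⁻¹)]
      ring
    have hstep1 : Df z' m ≤ Df w z' := by
      have h1 := tp w m z'
      have h2 : w - m = m - z' := by rw [hm]; module
      rw [h2] at h1
      have h3 := tp2 m z'
      have h4 := grad m hmI w hwD
      have h5 := grad z' hz' m (interior_subset hmI)
      linarith
    have hsmge : ε / 2 ≤ ‖m - z'‖ := by rw [hmnorm]; linarith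
    rcases eq_or_lt_of_le hsmge with heq | hlt
    · have h9 := hcall m (interior_subset hmI) heq.symm
      linarith
    · have hsm0 : (0:ℝ) < ‖m - z'‖ := by linarith
      set c₁ : ℝ := (ε / 2) / ‖m - z'‖ with hc₁
      have hc₁pos : 0 < c₁ := by positivity
      have hc₁lt : c₁ < 1 := by rw [hc₁, div_lt_one hsm0]; linarith
      have hne1 : (1:ℝ) - c₁ ≠ 0 := ne_of_gt (by linarith)
      set y' : H := z' + c₁ • (m - z') with hy'
      have hy'I : y' ∈ interior D := by
        have hrepr : y' = (1 - c₁) • z' + c₁ • m := by rw [hy']; module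
        rw [hrepr]
        exact hD.interior hz' hmI (by linarith) hc₁pos.le (by ring)
      have hy'norm : ‖y' - z'‖ = ε / 2 := by
        have he : y' - z' = c₁ • (m - z') := by rw [hy']; module
        rw [he, norm_smul, Real.norm_eq_abs, abs_of_pos hc₁pos, hc₁]
        field_simp
      have h1 := tp z' y' m
      have h2 : z' - y' = (c₁ / (1 - c₁)) • (y' - m) := by
        have ha : y' - m = (c₁ - 1) • (m - z') := by rw [hy']; module
        have hb : z' - y' = (-c₁) • (m - z') := by rw [hy']; module
        rw [ha, hb, smul_smul]
        congr 1
        field_simp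
        ring
      have h3 : (inner ℝ (z' - y') (g y' - g m) : ℝ)
          = (c₁ / (1 - c₁)) * (inner ℝ (y' - m) (g y' - g m) : ℝ) := by
        rw [h2, real_inner_smul_left]
      have h4 := tp2 y' m
      have h5 := grad m hmI y' (interior_subset hy'I)
      have h6 := grad y' hy'I m (interior_subset hmI)
      have h7 : (0:ℝ) ≤ c₁ / (1 - c₁) := div_nonneg hc₁pos.le (by linarith)
      have h8 : 0 ≤ (inner ℝ (z' - y') (g y' - g m) : ℝ) := by
        rw [h3]
        exact mul_nonneg h7 (by linarith)
      have h9 := hcall y' (interior_subset hy'I) hy'norm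
      linarith
  -- orbits stay in the cyclically shifted sets
  have horb : ∀ (i : ZMod p) (x : H), x ∈ A i → ∀ n : ℕ, T^[n] x ∈ A (i + (n : ZMod p)) := by
    intro i x hx n
    induction n with
    | zero => simpa using hx
    | succ n ih =>
        have h1 : T^[n+1] x = T (T^[n] x) := Function.iterate_succ_apply' T n x
        rw [h1]
        have h2 := hT (i + (n : ZMod p)) ih
        have h3 : (i + (n : ZMod p)) + 1 = i + ((n + 1 : ℕ) : ZMod p) := by push_cast; ring
        rwa [h3] at h2
  have husc := aux_usc D f hsc.convexOn hlsc z hzI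
  obtain ⟨i0, hx0i⟩ := Set.mem_iUnion.mp hx₀
  have hworb : ∀ n : ℕ, T^[n] x₀ ∈ A (i0 + (n : ZMod p)) := horb i0 x₀ hx0i
  have hwD : ∀ n : ℕ, T^[n] x₀ ∈ D := fun n => interior_subset (hAD _ (hworb n))
  -- Bregman distances of the convergent orbit to z tend to 0
  have hdlim : Tendsto (fun n => Df (T^[n] x₀) z) atTop (𝓝 0) := by
    rw [Metric.tendsto_atTop]
    intro ε hε
    obtain ⟨δ, hδ, hδf⟩ := husc (ε / 3) (by linarith)
    obtain ⟨N, hN⟩ := Metric.tendsto_atTop.mp hconv (min δ (ε / (3 * (‖g z‖ + 1))))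
      (lt_min hδ (by positivity))
    refine ⟨N, fun n hn => ?_⟩
    have h1 := hN n hn
    have h2 : dist (T^[n] x₀) z < δ := lt_of_lt_of_le h1 (min_le_left _ _)
    have h3 : dist (T^[n] x₀) z < ε / (3 * (‖g z‖ + 1)) := lt_of_lt_of_le h1 (min_le_right _ _)
    have h4 : f (T^[n] x₀) ≤ f z + ε / 3 := hδf _ h2
    have h5 : |(inner ℝ (T^[n] x₀ - z) (g z) : ℝ)| ≤ ‖T^[n] x₀ - z‖ * ‖g z‖ :=
      abs_real_inner_le_norm _ _
    rw [dist_eq_norm] at h3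
    have h6 : ‖T^[n] x₀ - z‖ * ‖g z‖ ≤ ε / (3 * (‖g z‖ + 1)) * (‖g z‖ + 1) := by
      nlinarith [norm_nonneg (g z), norm_nonneg (T^[n] x₀ - z)]
    have h7 : ε / (3 * (‖g z‖ + 1)) * (‖g z‖ + 1) = ε / 3 := by
      have hgz : (0:ℝ) < ‖g z‖ + 1 := by positivity
      field_simp
    have h8 : 0 ≤ Df (T^[n] x₀) z := grad z hzI _ (hwD n)
    have h9 : Df (T^[n] x₀) z ≤ 2 * ε / 3 := by
      rw [hDf]
      have h10 : -(inner ℝ (T^[n] x₀ - z) (g z) : ℝ)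
          ≤ |(inner ℝ (T^[n] x₀ - z) (g z) : ℝ)| := neg_le_abs _
      linarith
    rw [Real.dist_eq, sub_zero, abs_of_nonneg h8]
    linarith
  -- uniform bound on K at z
  obtain ⟨kbar, hkb⟩ : ∃ kb : ℝ, ∀ j : ZMod p, K j z ≤ kb := by
    choose Kb hKb using hKbdd
    refine ⟨Finset.univ.sup' Finset.univ_nonempty Kb, fun j => ?_⟩
    exact le_trans (hKb j z (hzA _)) (Finset.le_sup' Kb (Finset.mem_univ j))
  -- Part 1: z is a fixed point
  have hTz : T z = z := by
    have hmain : ∀ n : ℕ, Df z (T z) ≤ kbar * Df (T^[n] x₀) z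
        + |lam z| * (‖T^[n] x₀ - T^[n+1] x₀‖ * ‖g z - g (T z)‖)
        + ‖T^[n+1] x₀ - z‖ * ‖g z - g (T z)‖ := by
      intro n
      have hh := hhyb (i0 + (n : ZMod p)) (T^[n] x₀) (hworb n) z (hzA _)
      rw [← Function.iterate_succ_apply' T n x₀] at hh
      have htp := tp (T^[n+1] x₀) z (T z)
      have hKle : K (i0 + (n : ZMod p)) z * Df (T^[n] x₀) z ≤ kbar * Df (T^[n] x₀) z :=
        mul_le_mul_of_nonneg_right (hkb _) (grad z hzI _ (hwD n))
      have hlam1 : lam z * (inner ℝ (T^[n] x₀ - T^[n+1] x₀) (g z - g (T z)) : ℝ)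
          ≤ |lam z| * (‖T^[n] x₀ - T^[n+1] x₀‖ * ‖g z - g (T z)‖) := by
        calc lam z * (inner ℝ (T^[n] x₀ - T^[n+1] x₀) (g z - g (T z)) : ℝ)
            ≤ |lam z * (inner ℝ (T^[n] x₀ - T^[n+1] x₀) (g z - g (T z)) : ℝ)| := le_abs_self _
          _ = |lam z| * |(inner ℝ (T^[n] x₀ - T^[n+1] x₀) (g z - g (T z)) : ℝ)| := abs_mul _ _
          _ ≤ |lam z| * (‖T^[n] x₀ - T^[n+1] x₀‖ * ‖g z - g (T z)‖) :=
              mul_le_mul_of_nonneg_left (abs_real_inner_le_norm _ _) (abs_nonneg _)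
      have hinner2 : -(inner ℝ (T^[n+1] x₀ - z) (g z - g (T z)) : ℝ)
          ≤ ‖T^[n+1] x₀ - z‖ * ‖g z - g (T z)‖ :=
        le_trans (neg_le_abs _) (abs_real_inner_le_norm _ _)
      have h0 : 0 ≤ Df (T^[n+1] x₀) z := grad z hzI _ (hwD (n+1))
      linarith
    have hlim1 : Tendsto (fun n => kbar * Df (T^[n] x₀) z) atTop (𝓝 0) := by
      simpa using hdlim.const_mul kbar
    have hshift : Tendsto (fun n => T^[n+1] x₀) atTop (𝓝 z) :=
      hconv.comp (tendsto_add_atTop_nat 1)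
    have hwsub : Tendsto (fun n => T^[n] x₀ - T^[n+1] x₀) atTop (𝓝 0) := by
      simpa using hconv.sub hshift
    have hlim2 : Tendsto
        (fun n => |lam z| * (‖T^[n] x₀ - T^[n+1] x₀‖ * ‖g z - g (T z)‖)) atTop (𝓝 0) := by
      have h := (hwsub.norm.mul_const ‖g z - g (T z)‖).const_mul |lam z|
      simpa using h
    have hlim3 : Tendsto (fun n => ‖T^[n+1] x₀ - z‖ * ‖g z - g (T z)‖) atTop (𝓝 0) := by
      have h3 : Tendsto (fun n => T^[n+1] x₀ - z) atTop (𝓝 0) := by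
        simpa using hshift.sub (tendsto_const_nhds : Tendsto (fun _ : ℕ => z) atTop (𝓝 z))
      simpa using h3.norm.mul_const ‖g z - g (T z)‖
    have hsum : Tendsto (fun n => kbar * Df (T^[n] x₀) z
        + |lam z| * (‖T^[n] x₀ - T^[n+1] x₀‖ * ‖g z - g (T z)‖)
        + ‖T^[n+1] x₀ - z‖ * ‖g z - g (T z)‖) atTop (𝓝 0) := by
      simpa using (hlim1.add hlim2).add hlim3
    have hDinf : Df z (T z) ≤ 0 := ge_of_tendsto hsum (Filter.Eventually.of_forall hmain)
    by_contra hne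
    have hnorm : 0 < ‖z - T z‖ := by
      rw [norm_sub_pos_iff]
      exact fun h => hne h.symm
    obtain ⟨c, hc, hcall⟩ := lower (T z) hTzI ‖z - T z‖ hnorm
    have := hcall z hzI (le_refl _)
    linarith
  -- Part 3: all orbits converge to z
  have hpart3 : ∀ x ∈ ⋃ i, A i, Tendsto (fun n => T^[n] x) atTop (𝓝 z) := by
    intro x hx
    obtain ⟨i, hxi⟩ := Set.mem_iUnion.mp hx
    have horb' : ∀ n : ℕ, T^[n] x ∈ A (i + (n : ZMod p)) := horb i x hxi
    have hxD : ∀ n : ℕ, T^[n] x ∈ D := fun n => interior_subset (hAD _ (horb' n))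
    have hd0 : ∀ n : ℕ, 0 ≤ Df (T^[n] x) z := fun n => grad z hzI _ (hxD n)
    have hstep : ∀ n : ℕ, Df (T^[n+1] x) z ≤ K (i + (n : ZMod p)) z * Df (T^[n] x) z := by
      intro n
      have hh := hhyb (i + (n : ZMod p)) (T^[n] x) (horb' n) z (hzA _)
      rw [hTz, sub_self, inner_zero_right, mul_zero, add_zero] at hh
      rwa [← Function.iterate_succ_apply' T n x] at hh
    obtain ⟨κ, hκlt, hκ0, hκge⟩ : ∃ κ : ℝ, κ < 1 ∧ 0 ≤ κ ∧
        ∀ j : ZMod p, (∏ m ∈ Finset.range p, K (j + (m : ZMod p)) z) ≤ κ := by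
      refine ⟨Finset.univ.sup' Finset.univ_nonempty
        (fun j : ZMod p => ∏ m ∈ Finset.range p, K (j + (m : ZMod p)) z), ?_, ?_, ?_⟩
      · rw [Finset.sup'_lt_iff]
        intro j _
        have hh := hKhat j z (hzA _)
        have heq : ∀ m ∈ Finset.range p,
            K (j + (m : ZMod p)) (T^[m] z) = K (j + (m : ZMod p)) z := by
          intro m _
          rw [Function.iterate_fixed hTz]
        rwa [Finset.prod_congr rfl heq] at hh
      · refine le_trans ?_ (Finset.le_sup'
          (fun j : ZMod p => ∏ m ∈ Finset.range p, K (j + (m : ZMod p)) z)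
          (Finset.mem_univ (0 : ZMod p)))
        exact (Finset.prod_pos (fun m _ => hKpos _ z (hzA _))).le
      · intro j
        exact Finset.le_sup'
          (fun j : ZMod p => ∏ m ∈ Finset.range p, K (j + (m : ZMod p)) z)
          (Finset.mem_univ j)
    have hchain : ∀ n m : ℕ, Df (T^[n + m] x) z
        ≤ (∏ l ∈ Finset.range m, K (i + (n : ZMod p) + (l : ZMod p)) z) * Df (T^[n] x) z := by
      intro n m
      induction m with
      | zero => simp
      | succ m ih =>
          have h1 : n + (m + 1) = (n + m) + 1 := by ring
          have h2 := hstep (n + m)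
          have h3 : (i + ((n + m : ℕ) : ZMod p)) = i + (n : ZMod p) + (m : ZMod p) := by
            push_cast; ring
          rw [h3] at h2
          calc Df (T^[n + (m+1)] x) z = Df (T^[(n+m) + 1] x) z := by rw [h1]
            _ ≤ K (i + (n : ZMod p) + (m : ZMod p)) z * Df (T^[n+m] x) z := h2
            _ ≤ K (i + (n : ZMod p) + (m : ZMod p)) z *
                ((∏ l ∈ Finset.range m, K (i + (n : ZMod p) + (l : ZMod p)) z)
                  * Df (T^[n] x) z) :=
              mul_le_mul_of_nonneg_left ih (hKpos _ z (hzA _)).le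
            _ = (∏ l ∈ Finset.range (m+1), K (i + (n : ZMod p) + (l : ZMod p)) z)
                  * Df (T^[n] x) z := by
              rw [Finset.prod_range_succ]; ring
    have hwin : ∀ n : ℕ, Df (T^[n + p] x) z ≤ κ * Df (T^[n] x) z := by
      intro n
      calc Df (T^[n + p] x) z
          ≤ (∏ l ∈ Finset.range p, K (i + (n : ZMod p) + (l : ZMod p)) z) * Df (T^[n] x) z :=
            hchain n p
        _ ≤ κ * Df (T^[n] x) z := mul_le_mul_of_nonneg_right (hκge _) (hd0 n)
    have hdlim' : Tendsto (fun n => Df (T^[n] x) z) atTop (𝓝 0) :=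
      aux_contract _ p (by omega) κ hκ0 hκlt hd0 hwin
    rw [Metric.tendsto_atTop]
    intro ε hε
    obtain ⟨c, hc, hcall⟩ := lower z hzI ε hε
    obtain ⟨N, hN⟩ := Metric.tendsto_atTop.mp hdlim' c hc
    refine ⟨N, fun n hn => ?_⟩
    by_contra hcon
    push_neg at hcon
    have h1 : ε ≤ ‖T^[n] x - z‖ := by rw [← dist_eq_norm]; exact hcon
    have h2 := hcall (T^[n] x) (hAD _ (horb' n)) h1
    have h3 := hN n hn
    rw [Real.dist_eq, sub_zero, abs_of_nonneg (hd0 n)] at h3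
    linarith
  refine ⟨hTz, fun w hw hfw => ?_, hpart3⟩
  have hconst : ∀ n : ℕ, T^[n] w = w := fun n => Function.iterate_fixed hfw n
  have h3 := hpart3 w hw
  simp only [hconst] at h3
  exact (tendsto_nhds_unique h3 tendsto_const_nhds).symm
end

section
/- Let H be a real Hilbert space, D ⊆ H a convex set with nonempty interior, and f : H → ℝ a lower-semicontinuous function that is strictly convex and totally convex on D and Gâteaux differentiable on the interior of D with Gâteaux gradient g. Let p ≥ 2, let A_1, …, A_p (indices modulo p) be nonempty, bounded, closed, convex subsets of the interior of D, and let T : ∪_i A_i → ∪_i A_i satisfy T(A_i) ⊆ A_{i+1}. Assume for every i the restricted composite map T^p : A_i → A_i satisfies D_f(T^p x, T^p y) ≤ K̂(y) D_f(x,y) + λ_i(y) ⟪x − T^p x, g y − g(T^p y)⟫ for all x, y ∈ A_i, where K̂(y) < 1 and λ_i is bounded, and that for every i there is x ∈ A_i with (T^{np} x) norm-convergent in A_i. Then for each i the map T^p : A_i → A_i has a unique fixed point z_i ∈ A_i, and these fixed points are cyclically permuted by T: z_{i+j} = T^j z_i for all i and all 1 ≤ j ≤ p (indices modulo p). -/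
open Topology Filter

/-- Corollary 2.4 (second part): if for every `i` the restricted composite map
`T^p : A_i → A_i` is a generalized point-dependent `(K̂_i, λ_i)`-hybrid contraction relative to
the Bregman distance (with `K̂_i < 1` and `λ_i` bounded) and some orbit `(T^{np} x)` with
`x ∈ A_i` converges in norm to a point of `A_i`, then each `T^p : A_i → A_i` has a unique fixed
point `z_i ∈ A_i`, and these fixed points are cyclically permuted: `z_{i+j} = T^j z_i`. -/
theorem composite_fixed_points_cyclically_permuted
    {H : Type*} [NormedAddCommGroup H] [InnerProductSpace ℝ H] [CompleteSpace H]
    (D : Set H) (hD : Convex ℝ D) (hDint : (interior D).Nonempty)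
    (f : H → ℝ) (g : H → H)
    (hlsc : LowerSemicontinuous f)
    (hsc : StrictConvexOn ℝ D f)
    (hgat : ∀ x ∈ interior D, ∀ v : H,
      Tendsto (fun t : ℝ => (f (x + t • v) - f x) / t) (𝓝[≠] (0 : ℝ))
        (𝓝 (inner ℝ v (g x) : ℝ)))
    (Df : H → H → ℝ)
    (hDf : ∀ y x : H, Df y x = f y - f x - inner ℝ (y - x) (g x))
    -- total convexity: the modulus of total convexity is positive for `t > 0`
    (htc : ∀ x ∈ D, ∀ t : ℝ, 0 < t → ∃ c : ℝ, 0 < c ∧ ∀ y ∈ D, ‖y - x‖ = t → c ≤ Df x y)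
    (p : ℕ) (hp : 2 ≤ p)
    (A : ZMod p → Set H)
    (hAne : ∀ i, (A i).Nonempty)
    (hAbd : ∀ i, Bornology.IsBounded (A i))
    (hAcl : ∀ i, IsClosed (A i))
    (hAcx : ∀ i, Convex ℝ (A i))
    (hAD : ∀ i, A i ⊆ interior D)
    (T : H → H)
    (hT : ∀ i, Set.MapsTo T (A i) (A (i + 1)))
    (Khat : ZMod p → H → ℝ) (lam : ZMod p → H → ℝ)
    (hKpos : ∀ i, ∀ y ∈ A i, 0 < Khat i y)
    (hKlt : ∀ i, ∀ y ∈ A i, Khat i y < 1)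
    (hlam : ∀ i, ∃ M : ℝ, ∀ y ∈ A i, |lam i y| ≤ M)
    (hhyb : ∀ i, ∀ x ∈ A i, ∀ y ∈ A i,
      Df (T^[p] x) (T^[p] y) ≤ Khat i y * Df x y
        + lam i y * inner ℝ (x - T^[p] x) (g y - g (T^[p] y)))
    (hconv : ∀ i, ∃ x ∈ A i, ∃ w ∈ A i, Tendsto (fun n => T^[n * p] x) atTop (𝓝 w)) :
    ∃ z : ZMod p → H,
      (∀ i, z i ∈ A i ∧ T^[p] (z i) = z i ∧ ∀ w ∈ A i, T^[p] w = w → w = z i) ∧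
      ∀ i : ZMod p, ∀ j : ℕ, 1 ≤ j → j ≤ p → z (i + (j : ZMod p)) = T^[j] (z i) := by
  classical
  -- iterates map `A i` into `A (i + k)`
  have hiter : ∀ (k : ℕ) (i : ZMod p), Set.MapsTo T^[k] (A i) (A (i + (k : ZMod p))) := by
    intro k
    induction k with
    | zero => intro i; simpa using Set.mapsTo_id (A i)
    | succ k ih =>
      intro i
      have h1 : Set.MapsTo (T ∘ T^[k]) (A i) (A (i + (k : ZMod p) + 1)) :=
        (hT (i + (k : ZMod p))).comp (ih i)
      have hcast : (((k : ℕ) + 1 : ℕ) : ZMod p) = (k : ZMod p) + 1 := by push_cast; ring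
      rw [hcast, ← add_assoc, Function.iterate_succ']
      exact h1
  have hSinv : ∀ i : ZMod p, Set.MapsTo T^[p] (A i) (A i) := by
    intro i
    simpa [ZMod.natCast_self] using hiter p i
  have hsubD : ∀ i : ZMod p, A i ⊆ D := fun i => (hAD i).trans interior_subset
  -- nonpositive Bregman distance forces equality
  have key : ∀ i : ZMod p, ∀ u ∈ A i, ∀ v ∈ A i, Df u v ≤ 0 → u = v := by
    intro i u hu v hv hle
    by_contra hne
    have ht : (0:ℝ) < ‖v - u‖ := by
      rw [norm_pos_iff, sub_ne_zero]
      exact fun h => hne h.symm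
    obtain ⟨c, hc, hcle⟩ := htc u (hsubD i hu) _ ht
    have := hcle v (hsubD i hv) rfl
    linarith
  -- existence and uniqueness per index
  have main : ∀ i : ZMod p, ∃ z, z ∈ A i ∧ T^[p] z = z ∧ ∀ v ∈ A i, T^[p] v = v → v = z := by
    intro i
    obtain ⟨x, hx, w, hw, hcv⟩ := hconv i
    set u : ℕ → H := fun n => T^[n * p] x with hu
    have hstep : ∀ n, u (n+1) = T^[p] (u n) := by
      intro n
      simp only [hu]
      rw [show (n+1) * p = p + n * p by ring, Function.iterate_add_apply]
    have hmem : ∀ n, u n ∈ A i := by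
      intro n
      induction n with
      | zero => simpa [hu] using hx
      | succ n ih => rw [hstep]; exact hSinv i ih
    have hcv1 : Tendsto (fun n => u (n+1)) atTop (𝓝 w) :=
      hcv.comp (tendsto_add_atTop_nat 1)
    set K := Khat i w with hKdef
    have hK0 : 0 < K := hKpos i w hw
    have hK1 : K < 1 := hKlt i w hw
    set sw := T^[p] w with hswdef
    have hswA : sw ∈ A i := hSinv i hw
    set a : ℕ → ℝ := fun n => f (u n) with ha
    set r : ℕ → ℝ := fun n =>
      f sw + inner ℝ (u (n+1) - sw) (g sw) - K * (f w + inner ℝ (u n - w) (g w))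
        + lam i w * inner ℝ (u n - u (n+1)) (g w - g sw) with hr
    have hrec : ∀ n, a (n+1) ≤ K * a n + r n := by
      intro n
      have h := hhyb i (u n) (hmem n) w hw
      rw [← hswdef, ← hstep n, hDf, hDf] at h
      simp only [ha, hr]
      linarith
    -- r converges
    set R : ℝ := f sw + inner ℝ (w - sw) (g sw) - K * f w with hR
    have t1 : Tendsto (fun n => (inner ℝ (u (n+1) - sw) (g sw) : ℝ)) atTop
        (𝓝 (inner ℝ (w - sw) (g sw))) :=
      (hcv1.sub tendsto_const_nhds).inner tendsto_const_nhds
    have t2 : Tendsto (fun n => (inner ℝ (u n - w) (g w) : ℝ)) atTop (𝓝 0) := by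
      have h : Tendsto (fun n => (inner ℝ (u n - w) (g w) : ℝ)) atTop
          (𝓝 (inner ℝ (w - w) (g w) : ℝ)) :=
        (hcv.sub tendsto_const_nhds).inner tendsto_const_nhds
      simpa using h
    have t3 : Tendsto (fun n => (inner ℝ (u n - u (n+1)) (g w - g sw) : ℝ)) atTop (𝓝 0) := by
      have h : Tendsto (fun n => (inner ℝ (u n - u (n+1)) (g w - g sw) : ℝ)) atTop
          (𝓝 (inner ℝ (w - w) (g w - g sw) : ℝ)) :=
        (hcv.sub hcv1).inner tendsto_const_nhds
      simpa using h
    have c1 : Tendsto (fun _ : ℕ => f sw) atTop (𝓝 (f sw)) := tendsto_const_nhds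
    have c2 : Tendsto (fun _ : ℕ => f w) atTop (𝓝 (f w)) := tendsto_const_nhds
    have hrtend : Tendsto r atTop (𝓝 R) := by
      have h := ((c1.add t1).sub ((c2.add t2).const_mul K)).add (t3.const_mul (lam i w))
      simpa [hR] using h
    -- a is bounded above
    obtain ⟨N, hN⟩ : ∃ N, ∀ n ≥ N, r n ≤ R + 1 := by
      have := hrtend.eventually (eventually_le_nhds (lt_add_one R))
      exact (eventually_atTop.1 this)
    set M : ℝ := max (a N) ((R + 1) / (1 - K)) with hM
    have hMR : R + 1 ≤ (1 - K) * M := by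
      have h1 : (R + 1) / (1 - K) ≤ M := le_max_right _ _
      have h2 : (0:ℝ) < 1 - K := by linarith
      calc R + 1 = (1 - K) * ((R + 1) / (1 - K)) := by field_simp
        _ ≤ (1 - K) * M := by nlinarith
    have hup : ∀ k, a (N + k) ≤ M := by
      intro k
      induction k with
      | zero => simp only [Nat.add_zero]; exact le_max_left _ _
      | succ k ih =>
        have h1 := hrec (N + k)
        have h2 := hN (N + k) (Nat.le_add_right _ _)
        have h3 : K * a (N + k) ≤ K * M := by nlinarith
        have : a (N + k + 1) ≤ K * M + (R + 1) := by linarith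
        calc a (N + (k+1)) = a (N + k + 1) := by ring_nf
          _ ≤ K * M + (R + 1) := this
          _ ≤ M := by linarith
    have hbdd : IsBoundedUnder (· ≤ ·) atTop a := by
      refine ⟨M, ?_⟩
      rw [Filter.eventually_map]
      refine eventually_atTop.2 ⟨N, fun n hn => ?_⟩
      obtain ⟨k, rfl⟩ := Nat.exists_eq_add_of_le hn
      exact hup k
    -- a is bounded below via lsc
    have hlow : ∀ δ : ℝ, 0 < δ → ∀ᶠ n in atTop, f w - δ < a n := by
      intro δ hδ
      have : ∀ᶠ y in 𝓝 w, f w - δ < f y := hlsc w (f w - δ) (by linarith)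
      exact hcv.eventually this
    have hcob : IsCoboundedUnder (· ≤ ·) atTop a := by
      refine Filter.IsBoundedUnder.isCoboundedUnder_le ⟨f w - 1, ?_⟩
      rw [Filter.eventually_map]
      exact (hlow 1 one_pos).mono fun n hn => hn.le
    set L : ℝ := limsup a atTop with hL
    have hfwL : f w ≤ L := by
      have h : ∀ δ : ℝ, 0 < δ → f w - δ ≤ L :=
        fun δ hδ => le_limsup_of_frequently_le
          (((hlow δ hδ).mono fun n hn => hn.le).frequently) hbdd
      by_contra hcon
      push_neg at hcon
      have := h ((f w - L)/2) (by linarith)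
      linarith
    have hLKR : L ≤ K * L + R := by
      have hδ : ∀ δ : ℝ, 0 < δ → L ≤ K * L + R + (K + 1) * δ := by
        intro δ hδ
        have e1 : ∀ᶠ n in atTop, a n < L + δ :=
          eventually_lt_of_limsup_lt (by linarith : limsup a atTop < L + δ) hbdd
        have e2 : ∀ᶠ n in atTop, r n < R + δ :=
          hrtend.eventually (eventually_lt_nhds (by linarith : R < R + δ))
        have e3 : ∀ᶠ n in atTop, a (n + 1) ≤ K * (L + δ) + (R + δ) := by
          filter_upwards [e1, e2] with n h1 h2
          have := hrec n
          nlinarith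
        have e4 : ∀ᶠ n in atTop, a n ≤ K * (L + δ) + (R + δ) := by
          obtain ⟨N', hN'⟩ := eventually_atTop.1 e3
          refine eventually_atTop.2 ⟨N' + 1, fun n hn => ?_⟩
          obtain ⟨m, rfl⟩ := Nat.exists_eq_add_of_le hn
          have : N' + 1 + m = (N' + m) + 1 := by ring
          rw [this]
          exact hN' (N' + m) (Nat.le_add_right _ _)
        have := limsup_le_of_le hcob e4
        rw [← hL] at this
        linarith
      by_contra hcon
      push_neg at hcon
      have hpos : 0 < (L - (K * L + R)) / (2 * (K + 1)) := by
        apply div_pos (by linarith) (by linarith)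
      have := hδ _ hpos
      have hne : K + 1 ≠ 0 := by linarith
      have h2 : (K + 1) * ((L - (K * L + R)) / (2 * (K + 1))) = (L - (K * L + R)) / 2 := by
        field_simp
      rw [h2] at this
      linarith
    have hDfle : Df w sw ≤ 0 := by
      rw [hDf]
      have h1 : (1 - K) * f w ≤ (1 - K) * L :=
        mul_le_mul_of_nonneg_left hfwL (by linarith)
      simp only [hR] at hLKR
      nlinarith
    have hwfix : T^[p] w = w := by
      have := key i w hw sw hswA hDfle
      rw [hswdef] at this
      exact this.symm
    refine ⟨w, hw, hwfix, ?_⟩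
    intro v hv hfv
    have h := hhyb i v hv w hw
    rw [hfv, hwfix] at h
    simp only [sub_self, inner_zero_left, mul_zero, add_zero] at h
    refine key i v hv w hw ?_
    by_contra hpos
    push_neg at hpos
    nlinarith
  choose z hz1 hz2 hz3 using main
  refine ⟨z, fun i => ⟨hz1 i, hz2 i, hz3 i⟩, ?_⟩
  intro i j _ _
  have hm : T^[j] (z i) ∈ A (i + (j : ZMod p)) := hiter j i (hz1 i)
  have hfix : T^[p] (T^[j] (z i)) = T^[j] (z i) := by
    rw [← Function.iterate_add_apply, show p + j = j + p by ring,
      Function.iterate_add_apply, hz2 i]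
  exact (hz3 (i + (j : ZMod p)) _ hm hfix).symm
end

section
/- Let H be a real Hilbert space, D ⊆ H a convex set with nonempty interior, and f : H → ℝ a lower-semicontinuous strictly convex function on D that is Gâteaux differentiable on the interior of D with Gâteaux gradient g. Let p ≥ 2, let A_1, …, A_p (indices modulo p) be nonempty, bounded, closed subsets of the interior of D with A_i convex for a given i, and let T : ∪_j A_j → ∪_j A_j satisfy T(A_j) ⊆ A_{j+1}. Assume the restricted composite map T^p : A_i → A_i is generalized point-dependent (1, λ_i)-hybrid relative to D_f, i.e., there is λ_i : A_i → ℝ with D_f(T^p x, T^p y) ≤ D_f(x,y) + λ_i(y) ⟪x − T^p x, g y − g(T^p y)⟫ for all x, y ∈ A_i. Fix x ∈ A_i such that the orbit (Tⁿ x) is bounded, and define the averages S_n^{(i)} x = (1/n) Σ_{k=0}^{n−1} T^{kp} x. Then every weak cluster point of the sequence (S_n^{(i)} x) is a fixed point of T^p lying in A_i. -/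
open Topology Filter

private lemma grad_ineq {H : Type*} [NormedAddCommGroup H] [InnerProductSpace ℝ H]
    {D : Set H} {f : H → ℝ} {g : H → H} (hcv : ConvexOn ℝ D f)
    (hgat : ∀ x ∈ interior D, ∀ v : H,
      Tendsto (fun t : ℝ => (f (x + t • v) - f x) / t) (𝓝[≠] (0 : ℝ))
        (𝓝 (inner ℝ v (g x) : ℝ)))
    {b a : H} (hb : b ∈ interior D) (ha : a ∈ D) :
    (inner ℝ (a - b) (g b) : ℝ) ≤ f a - f b := by
  have hbD : b ∈ D := interior_subset hb
  have htend : Tendsto (fun t : ℝ => (f (b + t • (a - b)) - f b) / t) (𝓝[>] (0:ℝ))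
      (𝓝 (inner ℝ (a - b) (g b) : ℝ)) :=
    (hgat b hb (a - b)).mono_left (nhdsWithin_mono _ (fun t ht => ne_of_gt ht))
  refine le_of_tendsto htend ?_
  filter_upwards [Ioo_mem_nhdsGT_of_mem
    (⟨le_refl (0:ℝ), by norm_num⟩ : (0:ℝ) ∈ Set.Ico (0:ℝ) 1)] with t ht
  have h1 : b + t • (a - b) = (1 - t) • b + t • a := by
    rw [smul_sub, sub_smul, one_smul]; abel
  have h2 : f ((1 - t) • b + t • a) ≤ (1 - t) * f b + t * f a :=
    hcv.2 hbD ha (by linarith [ht.2]) (le_of_lt ht.1) (by ring)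
  rw [h1, div_le_iff₀ ht.1]
  nlinarith [ht.1, ht.2]

/-- Theorem 2.6 (i): if the restricted composite map `T^p : A_i → A_i` of a `p`-cyclic
self-mapping is generalized point-dependent `(1, λ_i)`-hybrid relative to the Bregman distance
and the orbit `(Tⁿ x)` of some `x ∈ A_i` is bounded, then every weak cluster point of the
averages `S_n^{(i)} x = (1/n) Σ_{k<n} T^{kp} x` is a fixed point of `T^p` lying in `A_i`. -/
theorem weak_cluster_points_of_averages_are_fixed_points
    {H : Type*} [NormedAddCommGroup H] [InnerProductSpace ℝ H] [CompleteSpace H]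
    (D : Set H) (hD : Convex ℝ D) (hDint : (interior D).Nonempty)
    (f : H → ℝ) (g : H → H)
    (hlsc : LowerSemicontinuous f)
    (hsc : StrictConvexOn ℝ D f)
    (hgat : ∀ x ∈ interior D, ∀ v : H,
      Tendsto (fun t : ℝ => (f (x + t • v) - f x) / t) (𝓝[≠] (0 : ℝ))
        (𝓝 (inner ℝ v (g x) : ℝ)))
    (Df : H → H → ℝ)
    (hDf : ∀ y x : H, Df y x = f y - f x - inner ℝ (y - x) (g x))
    (p : ℕ) (hp : 2 ≤ p)
    (A : ZMod p → Set H)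
    (hAne : ∀ j, (A j).Nonempty)
    (hAbd : ∀ j, Bornology.IsBounded (A j))
    (hAcl : ∀ j, IsClosed (A j))
    (hAD : ∀ j, A j ⊆ interior D)
    (T : H → H)
    (hT : ∀ j, Set.MapsTo T (A j) (A (j + 1)))
    (i : ZMod p) (hAicx : Convex ℝ (A i))
    (lam : H → ℝ)
    (hhyb : ∀ x ∈ A i, ∀ y ∈ A i,
      Df (T^[p] x) (T^[p] y) ≤ Df x y
        + lam y * inner ℝ (x - T^[p] x) (g y - g (T^[p] y)))
    (x : H) (hx : x ∈ A i)
    (horb : Bornology.IsBounded (Set.range fun n => T^[n] x))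
    (S : ℕ → H)
    (hS : ∀ n : ℕ, S n = (n : ℝ)⁻¹ • ∑ k ∈ Finset.range n, T^[k * p] x) :
    ∀ v : H, (∃ φ : ℕ → ℕ, StrictMono φ ∧
        ∀ w : H, Tendsto (fun n => (inner ℝ (S (φ n)) w : ℝ)) atTop (𝓝 (inner ℝ v w : ℝ))) →
      v ∈ A i ∧ T^[p] v = v := by
  rintro v ⟨φ, hφ, hweak⟩
  have hcv : ConvexOn ℝ D f := hsc.convexOn
  -- iterates map A j into A (j + n)
  have hmapsTo : ∀ (n : ℕ) (j : ZMod p), Set.MapsTo (T^[n]) (A j) (A (j + n)) := by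
    intro n
    induction n with
    | zero => intro j z hz; simpa using hz
    | succ n ih =>
      intro j z hz
      rw [Function.iterate_succ_apply']
      have h2 := hT (j + n) (ih j hz)
      have : (j + n) + 1 = j + ((n : ℕ) + 1 : ℕ) := by push_cast; ring
      rwa [this] at h2
  have hdk : ∀ k : ℕ, T^[k * p] x ∈ A i := by
    intro k
    have h2 := hmapsTo (k * p) i hx
    have : i + ((k * p : ℕ) : ZMod p) = i := by
      push_cast
      simp [ZMod.natCast_self]
    rw [this] at h2
    exact h2
  have hTpmem : ∀ z ∈ A i, T^[p] z ∈ A i := by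
    intro z hz
    have h2 := hmapsTo p i hz
    have : i + ((p : ℕ) : ZMod p) = i := by simp [ZMod.natCast_self]
    rw [this] at h2
    exact h2
  -- Bregman distance is nonnegative
  have hDfnn : ∀ a ∈ D, ∀ b ∈ interior D, 0 ≤ Df a b := by
    intro a ha b hb
    rw [hDf]
    have := grad_ineq hcv hgat hb ha
    linarith
  -- zero Bregman distance implies equality (strict convexity)
  have hDfeq : ∀ a ∈ interior D, ∀ b ∈ interior D, Df a b ≤ 0 → a = b := by
    intro a ha b hb hle
    by_contra hne
    have haD : a ∈ D := interior_subset ha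
    have hbD : b ∈ D := interior_subset hb
    have h0 : Df a b = 0 := le_antisymm hle (hDfnn a haD b hb)
    rw [hDf] at h0
    have hmid := hsc.2 haD hbD hne (by norm_num : (0:ℝ) < 1/2)
      (by norm_num : (0:ℝ) < 1/2) (by norm_num)
    have hmemD : (1/2 : ℝ) • a + (1/2 : ℝ) • b ∈ D :=
      hD haD hbD (by norm_num) (by norm_num) (by norm_num)
    have hg := grad_ineq hcv hgat hb hmemD
    have hvec : (1/2 : ℝ) • a + (1/2 : ℝ) • b - b = (1/2 : ℝ) • (a - b) := by
      module
    rw [hvec, real_inner_smul_left] at hg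
    rw [smul_eq_mul, smul_eq_mul] at hmid
    linarith
  -- S n belongs to A i for n ≥ 1
  have hSmem : ∀ n : ℕ, 1 ≤ n → S n ∈ A i := by
    intro n hn
    rw [hS, Finset.smul_sum]
    refine hAicx.sum_mem (fun k _ => by positivity) ?_ (fun k _ => hdk k)
    rw [Finset.sum_const, Finset.card_range, nsmul_eq_mul,
      mul_inv_cancel₀ (Nat.cast_ne_zero.mpr (by omega))]
  -- v ∈ A i (closed convex sets are weakly closed)
  have hvA : v ∈ A i := by
    by_contra hv
    obtain ⟨F, u, hFu, huF⟩ := geometric_hahn_banach_closed_point hAicx (hAcl i) hv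
    obtain ⟨w, hw⟩ := (InnerProductSpace.toDual ℝ H).surjective F
    have hFz : ∀ z : H, F z = inner ℝ z w := by
      intro z
      rw [← hw, InnerProductSpace.toDual_apply_apply, real_inner_comm]
    have hlim := hweak w
    have hle : (inner ℝ v w : ℝ) ≤ u := by
      refine le_of_tendsto hlim ?_
      filter_upwards [eventually_ge_atTop 1] with m hm
      have hmem := hSmem (φ m) (le_trans hm hφ.le_apply)
      have h3 := hFu _ hmem
      rw [hFz] at h3
      linarith
    have h4 := huF
    rw [hFz] at h4
    linarith
  -- norm bound on the orbit
  obtain ⟨M, hM⟩ := isBounded_iff_forall_norm_le.mp horb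
  have hnormd : ∀ k : ℕ, ‖T^[k] x‖ ≤ M := fun k => hM _ ⟨k, rfl⟩
  have hM0 : 0 ≤ M := le_trans (norm_nonneg _) (hnormd 0)
  -- the key inequality for every y ∈ A i
  have key : ∀ y ∈ A i, 0 ≤ (f (T^[p] y) - f y + (inner ℝ y (g y) : ℝ)
      - (inner ℝ (T^[p] y) (g (T^[p] y)) : ℝ))
      + (inner ℝ v (g (T^[p] y) - g y) : ℝ) := by
    intro y hy
    have hTyA : T^[p] y ∈ A i := hTpmem y hy
    have hTyD : T^[p] y ∈ interior D := hAD i hTyA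
    set Ty : H := T^[p] y with hTy
    set c : ℝ := f Ty - f y + (inner ℝ y (g y) : ℝ) - (inner ℝ Ty (g Ty) : ℝ) with hc
    set h : H := g Ty - g y with hh
    set d : ℕ → H := fun k => T^[k * p] x with hd
    have hdmem : ∀ k, d k ∈ A i := hdk
    have hdTp : ∀ k, T^[p] (d k) = d (k + 1) := by
      intro k
      simp only [hd]
      rw [← Function.iterate_add_apply]
      congr 1
      ring
    set u : ℕ → ℝ := fun k => Df (d k) Ty with hu
    have hstep : ∀ k : ℕ, u (k + 1) - u k ≤ c + (inner ℝ (d k) h : ℝ)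
        + lam y * ((inner ℝ (d k) (g y - g Ty) : ℝ) - (inner ℝ (d (k+1)) (g y - g Ty) : ℝ)) := by
      intro k
      have h1 := hhyb (d k) (hdmem k) y hy
      rw [hdTp k] at h1
      simp only [hu, hDf, hc, hh]
      simp only [hDf, inner_sub_left, inner_sub_right] at h1 ⊢
      nlinarith [h1]
    have hsum : ∀ n : ℕ, u n - u 0 ≤ (n : ℝ) * c + (inner ℝ (∑ k ∈ Finset.range n, d k) h : ℝ)
        + lam y * ((inner ℝ (d 0) (g y - g Ty) : ℝ) - (inner ℝ (d n) (g y - g Ty) : ℝ)) := by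
      intro n
      have h1 : u n - u 0 = ∑ k ∈ Finset.range n, (u (k+1) - u k) :=
        (Finset.sum_range_sub u n).symm
      rw [h1]
      calc ∑ k ∈ Finset.range n, (u (k+1) - u k)
          ≤ ∑ k ∈ Finset.range n, (c + (inner ℝ (d k) h : ℝ)
            + lam y * ((inner ℝ (d k) (g y - g Ty) : ℝ) - (inner ℝ (d (k+1)) (g y - g Ty) : ℝ))) :=
            Finset.sum_le_sum (fun k _ => hstep k)
        _ = (n : ℝ) * c + (inner ℝ (∑ k ∈ Finset.range n, d k) h : ℝ)
            + lam y * ((inner ℝ (d 0) (g y - g Ty) : ℝ) - (inner ℝ (d n) (g y - g Ty) : ℝ)) := by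
            rw [Finset.sum_add_distrib, Finset.sum_add_distrib, Finset.sum_const,
              Finset.card_range, ← Finset.mul_sum,
              Finset.sum_range_sub' (fun k => (inner ℝ (d k) (g y - g Ty) : ℝ)),
              sum_inner, nsmul_eq_mul]
    have hkey : ∀ n : ℕ, 1 ≤ n →
        -(u 0 + lam y * ((inner ℝ (d 0) (g y - g Ty) : ℝ) - (inner ℝ (d n) (g y - g Ty) : ℝ))) / n
          ≤ c + (inner ℝ (S n) h : ℝ) := by
      intro n hn
      have hnpos : (0:ℝ) < n := by exact_mod_cast hn
      have h0 : (0:ℝ) ≤ u n := hDfnn (d n) (interior_subset (hAD i (hdmem n))) Ty hTyD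
      have h1 := hsum n
      have hSn : (inner ℝ (S n) h : ℝ) = (n:ℝ)⁻¹ * (inner ℝ (∑ k ∈ Finset.range n, d k) h : ℝ) := by
        rw [hS n, real_inner_smul_left]
      have hX : ((n:ℝ)⁻¹ * (inner ℝ (∑ k ∈ Finset.range n, d k) h : ℝ)) * n
          = (inner ℝ (∑ k ∈ Finset.range n, d k) h : ℝ) := by
        field_simp
      rw [div_le_iff₀ hnpos, hSn]
      nlinarith [h0, h1, hX]
    -- pass to the limit along φ
    have hφtop : Tendsto φ atTop atTop := hφ.tendsto_atTop
    have hinv : Tendsto (fun m => ((φ m : ℝ))⁻¹) atTop (𝓝 0) :=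
      tendsto_inv_atTop_nhds_zero_nat.comp hφtop
    set K : ℝ := |u 0| + |lam y| * ((M + M) * ‖g y - g Ty‖) with hK
    have hf1 : Tendsto (fun m =>
        -(u 0 + lam y * ((inner ℝ (d 0) (g y - g Ty) : ℝ)
          - (inner ℝ (d (φ m)) (g y - g Ty) : ℝ))) / (φ m : ℝ)) atTop (𝓝 0) := by
      apply squeeze_zero_norm (a := fun m => K * ((φ m : ℝ))⁻¹)
      · intro m
        have h1 : |(inner ℝ (d 0) (g y - g Ty) : ℝ) - (inner ℝ (d (φ m)) (g y - g Ty) : ℝ)|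
            ≤ (M + M) * ‖g y - g Ty‖ := by
          rw [← inner_sub_left]
          refine (abs_real_inner_le_norm _ _).trans ?_
          have hnd : ‖d 0 - d (φ m)‖ ≤ M + M := by
            refine (norm_sub_le _ _).trans ?_
            have := hnormd (0 * p)
            have := hnormd (φ m * p)
            simp only [hd]
            linarith
          exact mul_le_mul_of_nonneg_right hnd (norm_nonneg _)
        have h2 : |-(u 0 + lam y * ((inner ℝ (d 0) (g y - g Ty) : ℝ)
            - (inner ℝ (d (φ m)) (g y - g Ty) : ℝ)))| ≤ K := by
          rw [abs_neg]
          refine (abs_add_le _ _).trans ?_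
          rw [abs_mul, hK]
          gcongr
        rw [Real.norm_eq_abs, abs_div, Nat.abs_cast, div_eq_mul_inv]
        exact mul_le_mul_of_nonneg_right h2 (by positivity)
      · simpa using hinv.const_mul K
    have hg1 : Tendsto (fun m => c + (inner ℝ (S (φ m)) h : ℝ)) atTop
        (𝓝 (c + (inner ℝ v h : ℝ))) := tendsto_const_nhds.add (hweak h)
    have hle : (0:ℝ) ≤ c + (inner ℝ v h : ℝ) := by
      refine le_of_tendsto_of_tendsto hf1 hg1 ?_
      filter_upwards [eventually_ge_atTop 1] with m hm
      exact hkey (φ m) (le_trans hm hφ.le_apply)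
    simpa [hc, hh] using hle
  -- conclude: apply key at y = v
  have hkv := key v hvA
  have hTvA : T^[p] v ∈ A i := hTpmem v hvA
  have hDfle : Df v (T^[p] v) ≤ 0 := by
    rw [hDf]
    simp only [inner_sub_left, inner_sub_right] at hkv ⊢
    linarith
  have := hDfeq v (hAD i hvA) (T^[p] v) (hAD i hTvA) hDfle
  exact ⟨hvA, this.symm⟩
end

section
/- Let H be a real Hilbert space, let p ≥ 2, let A_1, …, A_p (indices modulo p) be nonempty, bounded, closed, convex subsets of H, and let T : ∪_i A_i → ∪_i A_i satisfy T(A_i) ⊆ A_{i+1}. Assume T is a p-cyclic contraction: there is α ∈ (0,1) such that ‖Tx − Ty‖ ≤ α‖x − y‖ + (1 − α)·dist(A_i, A_{i+1}) for all x ∈ A_i, y ∈ A_{i+1} and all i, where dist(A_i, A_{i+1}) = inf{‖u − w‖ : u ∈ A_i, w ∈ A_{i+1}}. Then for each i the restricted composite map T^p : A_i → A_i has a unique fixed point v_i ∈ A_i, each v_i is a best proximity point of T, i.e., ‖v_i − T v_i‖ = dist(A_i, A_{i+1}), and these points are cyclically permuted by T: v_{i+j} = T^j v_i for all i and all 1 ≤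 j ≤ p (indices modulo p). -/
open Topology Filter

set_option maxHeartbeats 1000000 in
/-- Theorem 3.3 (i): a `p`-cyclic contraction `T` on nonempty bounded closed convex subsets of
a Hilbert space has, for each `i`, a unique fixed point `v_i` of the restricted composite map
`T^p : A_i → A_i`; each `v_i` is a best proximity point, `‖v_i − T v_i‖ = dist(A_i, A_{i+1})`,
and the points are cyclically permuted: `v_{i+j} = T^j v_i`. -/
theorem cyclic_contraction_best_proximity_points
    {H : Type*} [NormedAddCommGroup H] [InnerProductSpace ℝ H] [CompleteSpace H]
    (p : ℕ) (hp : 2 ≤ p)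
    (A : ZMod p → Set H)
    (hAne : ∀ i, (A i).Nonempty)
    (hAbd : ∀ i, Bornology.IsBounded (A i))
    (hAcl : ∀ i, IsClosed (A i))
    (hAcx : ∀ i, Convex ℝ (A i))
    (T : H → H)
    (hT : ∀ i, Set.MapsTo T (A i) (A (i + 1)))
    (dd : ZMod p → ℝ)
    (hdd : ∀ i, dd i = sInf {r : ℝ | ∃ u ∈ A i, ∃ w ∈ A (i + 1), r = ‖u - w‖})
    (α : ℝ) (hα0 : 0 < α) (hα1 : α < 1)
    (hcontr : ∀ i : ZMod p, ∀ x ∈ A i, ∀ y ∈ A (i + 1),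
      ‖T x - T y‖ ≤ α * ‖x - y‖ + (1 - α) * dd i) :
    ∃ v : ZMod p → H, ∀ i : ZMod p,
      v i ∈ A i ∧ T^[p] (v i) = v i ∧ (∀ w ∈ A i, T^[p] w = w → w = v i) ∧
      ‖v i - T (v i)‖ = dd i ∧
      ∀ j : ℕ, 1 ≤ j → j ≤ p → v (i + (j : ZMod p)) = T^[j] (v i) := by
  haveI : NeZero p := ⟨by omega⟩
  -- basic facts about the distance sets
  have hSne : ∀ i : ZMod p,
      {r : ℝ | ∃ u ∈ A i, ∃ w ∈ A (i + 1), r = ‖u - w‖}.Nonempty := by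
    intro i
    obtain ⟨u, hu⟩ := hAne i
    obtain ⟨w, hw⟩ := hAne (i + 1)
    exact ⟨‖u - w‖, u, hu, w, hw, rfl⟩
  have hSlb : ∀ i : ZMod p,
      ∀ r ∈ {r : ℝ | ∃ u ∈ A i, ∃ w ∈ A (i + 1), r = ‖u - w‖}, 0 ≤ r := by
    rintro i r ⟨u, hu, w, hw, rfl⟩
    positivity
  have hdd_le : ∀ i : ZMod p, ∀ u ∈ A i, ∀ w ∈ A (i + 1), dd i ≤ ‖u - w‖ := by
    intro i u hu w hw
    rw [hdd i]
    exact csInf_le ⟨0, hSlb i⟩ ⟨u, hu, w, hw, rfl⟩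
  have hdd0 : ∀ i : ZMod p, 0 ≤ dd i := by
    intro i
    rw [hdd i]
    exact Real.sInf_nonneg (hSlb i)
  -- the distances are all equal
  have hstep : ∀ i : ZMod p, dd (i + 1) ≤ dd i := by
    intro i
    have hlb : ∀ r ∈ {r : ℝ | ∃ u ∈ A i, ∃ w ∈ A (i + 1), r = ‖u - w‖},
        (dd (i + 1) - (1 - α) * dd i) / α ≤ r := by
      rintro r ⟨u, hu, w, hw, rfl⟩
      have h1 : dd (i + 1) ≤ ‖T u - T w‖ := hdd_le (i + 1) _ (hT i hu) _ (hT (i + 1) hw)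
      have h2 := hcontr i u hu w hw
      rw [div_le_iff₀ hα0]
      linarith
    have h3 := le_csInf (hSne i) hlb
    rw [← hdd i, div_le_iff₀ hα0] at h3
    linarith
  have hmono : ∀ (i : ZMod p) (n : ℕ), dd (i + n) ≤ dd i := by
    intro i n
    induction n with
    | zero => simp
    | succ n ih =>
      have h := hstep (i + n)
      have he : i + ((n : ℕ) + 1 : ℕ) = i + n + 1 := by push_cast; ring
      rw [he]
      exact h.trans ih
  have hall : ∀ i j : ZMod p, dd j ≤ dd i := by
    intro i j
    have h := hmono i (j - i).val
    rwa [ZMod.natCast_val, ZMod.cast_id, add_sub_cancel] at h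
  set d : ℝ := dd 0 with hdDef
  have hdconst : ∀ i, dd i = d := fun i => le_antisymm (hall 0 i) (hall i 0)
  have hd0 : 0 ≤ d := hdd0 0
  have hd_lb : ∀ i : ZMod p, ∀ u ∈ A i, ∀ w ∈ A (i + 1), d ≤ ‖u - w‖ := by
    intro i u hu w hw
    rw [← hdconst i]; exact hdd_le i u hu w hw
  have hcontr' : ∀ i : ZMod p, ∀ x ∈ A i, ∀ y ∈ A (i + 1),
      ‖T x - T y‖ ≤ α * ‖x - y‖ + (1 - α) * d := by
    intro i x hx y hy
    have := hcontr i x hx y hy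
    rwa [hdconst i] at this
  -- a uniform bound on distances between points of the sets
  obtain ⟨R, hR0, hR⟩ : ∃ R : ℝ, 0 ≤ R ∧ ∀ (j k : ZMod p), ∀ x ∈ A j, ∀ y ∈ A k, ‖x - y‖ ≤ R := by
    have hb : Bornology.IsBounded (⋃ i, A i) := Bornology.isBounded_iUnion.mpr hAbd
    obtain ⟨C, hC⟩ := Metric.isBounded_iff.mp hb
    refine ⟨max C 0, le_max_right _ _, ?_⟩
    intro j k x hx y hy
    have h1 : x ∈ ⋃ i, A i := Set.mem_iUnion.mpr ⟨j, hx⟩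
    have h2 : y ∈ ⋃ i, A i := Set.mem_iUnion.mpr ⟨k, hy⟩
    have := hC h1 h2
    rw [dist_eq_norm] at this
    exact this.trans (le_max_left _ _)
  -- membership of iterates
  have hTiter : ∀ (j : ZMod p) (u : H), u ∈ A j → ∀ k : ℕ, T^[k] u ∈ A (j + k) := by
    intro j u hu k
    induction k with
    | zero => simpa using hu
    | succ k ih =>
      have h := hT (j + k) ih
      rw [Function.iterate_succ_apply']
      have he : j + ((k : ℕ) + 1 : ℕ) = j + k + 1 := by push_cast; ring
      rw [he]
      exact h
  have hαple : α ^ p < 1 := pow_lt_one₀ hα0.le hα1 (by omega)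
  have hαp0 : 0 < α ^ p := pow_pos hα0 p
  -- the parallelogram estimate
  have par : ∀ j : ZMod p, ∀ u ∈ A j, ∀ z ∈ A j, ∀ y ∈ A (j + 1),
      ‖u - z‖ ^ 2 ≤ 2 * ‖u - y‖ ^ 2 + 2 * ‖z - y‖ ^ 2 - 4 * d ^ 2 := by
    intro j u hu z hz y hy
    have hmid : (1/2 : ℝ) • u + (1/2 : ℝ) • z ∈ A j :=
      (hAcx j) hu hz (by norm_num) (by norm_num) (by norm_num)
    have hmd : d ≤ ‖(1/2 : ℝ) • u + (1/2 : ℝ) • z - y‖ := hd_lb j _ hmid y hy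
    have hpar := parallelogram_law_with_norm ℝ (u - y) (z - y)
    have he1 : u - y + (z - y) = (2 : ℝ) • ((1/2 : ℝ) • u + (1/2 : ℝ) • z - y) := by
      module
    have he2 : u - y - (z - y) = u - z := by abel
    rw [he1, he2, norm_smul, Real.norm_ofNat] at hpar
    nlinarith [norm_nonneg ((1/2 : ℝ) • u + (1/2 : ℝ) • z - y), norm_nonneg (u - z),
      norm_nonneg (u - y), norm_nonneg (z - y)]
  -- cross estimate: if `v, w ∈ A i` are fixed points of `T^[p]`, then `‖v - T w‖ = d`
  have cross : ∀ i : ZMod p, ∀ v ∈ A i, ∀ w ∈ A i,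
      T^[p] v = v → T^[p] w = w → ‖v - T w‖ = d := by
    intro i v hv w hw hfv hfw
    set c : ℝ := ‖v - T w‖ with hc
    have hcd : d ≤ c := hd_lb i v hv (T w) (hT i hw)
    have key : ∀ k : ℕ, ‖T^[k] v - T^[k] (T w)‖ ≤ α ^ k * c + (1 - α ^ k) * d := by
      intro k
      induction k with
      | zero => simpa using hc.symm.le
      | succ k ih =>
        have h1 : T^[k] v ∈ A (i + k) := hTiter i v hv k
        have h2 : T^[k] (T w) ∈ A (i + k + 1) := by
          have h := hTiter (i + 1) (T w) (hT i hw) k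
          have he : i + 1 + (k : ZMod p) = i + k + 1 := by ring
          rwa [he] at h
        have h3 := hcontr' (i + k) _ h1 _ h2
        rw [Function.iterate_succ_apply', Function.iterate_succ_apply']
        calc ‖T (T^[k] v) - T (T^[k] (T w))‖
            ≤ α * ‖T^[k] v - T^[k] (T w)‖ + (1 - α) * d := h3
          _ ≤ α * (α ^ k * c + (1 - α ^ k) * d) + (1 - α) * d := by nlinarith
          _ = α ^ (k + 1) * c + (1 - α ^ (k + 1)) * d := by ring
    have hk := key p
    have he1 : T^[p] (T w) = T w := by
      rw [← Function.iterate_succ_apply, Function.iterate_succ_apply', hfw]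
    rw [hfv, he1, ← hc] at hk
    nlinarith
  have uniq : ∀ i : ZMod p, ∀ v ∈ A i, ∀ w ∈ A i,
      T^[p] v = v → T^[p] w = w → v = w := by
    intro i v hv w hw hfv hfw
    have h1 := cross i v hv w hw hfv hfw
    have h2 := cross i w hw w hw hfw hfw
    have h3 := par i v hv w hw (T w) (hT i hw)
    rw [h1, h2] at h3
    have h4 : ‖v - w‖ = 0 := by nlinarith [norm_nonneg (v - w), sq_nonneg ‖v - w‖]
    have h5 := norm_eq_zero.mp h4
    have h6 : v - w + w = 0 + w := by rw [h5]
    simpa using h6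
  -- existence of a fixed point of `T^[p]` in each `A i`
  have main : ∀ i : ZMod p, ∃ v ∈ A i, T^[p] v = v := by
    intro i
    obtain ⟨x0, hx0⟩ := hAne i
    set x : ℕ → H := fun n => T^[n] x0 with hxdef
    have hxmem : ∀ n : ℕ, x n ∈ A (i + n) := fun n => hTiter i x0 hx0 n
    have hxsucc : ∀ n : ℕ, x (n + 1) = T (x n) := fun n => Function.iterate_succ_apply' T n x0
    -- key gap estimate
    have gap : ∀ g : ℕ, ((g : ZMod p) = 1 ∨ (g : ZMod p) = -1) →
        ∀ n : ℕ, ‖x n - x (n + g)‖ ≤ d + α ^ n * R := by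
      intro g hg n
      induction n with
      | zero =>
        have h := hR (i + ((0:ℕ) : ZMod p)) (i + ((g:ℕ) : ZMod p)) (x 0) (hxmem 0) (x g) (hxmem g)
        have : ‖x 0 - x (0 + g)‖ ≤ R := by simpa using h
        simpa using this.trans (by nlinarith)
      | succ n ih =>
        have hx1 : x (n + 1) = T (x n) := hxsucc n
        have hx2 : x (n + 1 + g) = T (x (n + g)) := by
          rw [show n + 1 + g = (n + g) + 1 by ring, hxsucc (n + g)]
        rcases hg with hg | hg
        · have hmem2 : x (n + g) ∈ A (i + n + 1) := by
            have h := hxmem (n + g)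
            have he : i + ((n + g : ℕ) : ZMod p) = i + n + 1 := by push_cast [hg]; ring
            rwa [he] at h
          have h3 := hcontr' (i + n) (x n) (hxmem n) (x (n + g)) hmem2
          rw [hx1, hx2]
          calc ‖T (x n) - T (x (n + g))‖ ≤ α * ‖x n - x (n + g)‖ + (1 - α) * d := h3
            _ ≤ α * (d + α ^ n * R) + (1 - α) * d := by nlinarith
            _ = d + α ^ (n + 1) * R := by ring
        · have hmem1 : x (n + g) ∈ A (i + n - 1) := by
            have h := hxmem (n + g)
            have he : i + ((n + g : ℕ) : ZMod p) = i + n - 1 := by push_cast [hg]; ring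
            rwa [he] at h
          have hmem2 : x n ∈ A (i + n - 1 + 1) := by
            have h := hxmem n
            have he : i + (n : ZMod p) = i + n - 1 + 1 := by ring
            rwa [he] at h
          have h3 := hcontr' (i + n - 1) (x (n + g)) hmem1 (x n) hmem2
          rw [hx1, hx2, norm_sub_rev]
          calc ‖T (x (n + g)) - T (x n)‖ ≤ α * ‖x (n + g) - x n‖ + (1 - α) * d := h3
            _ = α * ‖x n - x (n + g)‖ + (1 - α) * d := by rw [norm_sub_rev]
            _ ≤ α * (d + α ^ n * R) + (1 - α) * d := by nlinarith
            _ = d + α ^ (n + 1) * R := by ring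
    -- the subsequence in `A i`
    set y : ℕ → H := fun n => x (p * n) with hydef
    have hpn0 : ∀ n : ℕ, ((p * n : ℕ) : ZMod p) = 0 := by
      intro n; push_cast [ZMod.natCast_self]; ring
    have hymem : ∀ n : ℕ, y n ∈ A i := by
      intro n
      have h := hxmem (p * n)
      rwa [hpn0 n, add_zero] at h
    have hxp1mem : ∀ n : ℕ, x (p * n + 1) ∈ A (i + 1) := by
      intro n
      have h := hxmem (p * n + 1)
      have he : i + ((p * n + 1 : ℕ) : ZMod p) = i + 1 := by push_cast [ZMod.natCast_self]; ring
      rwa [he] at h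
    have hy1 : ∀ n : ℕ, ‖y n - x (p * n + 1)‖ ≤ d + α ^ (p * n) * R := by
      intro n
      have h := gap 1 (Or.inl (by norm_num)) (p * n)
      simpa using h
    have key2 : ∀ n m : ℕ, n ≤ m →
        ‖y m - y n‖ ^ 2 ≤ 4 * (d + α ^ (p * n) * R) ^ 2 - 4 * d ^ 2 := by
      intro n m hnm
      rcases eq_or_lt_of_le hnm with rfl | hlt
      · have h1 : (0:ℝ) ≤ α ^ (p * n) * R := by positivity
        simp only [sub_self, norm_zero]
        nlinarith
      · have hg1 : 1 ≤ p * (m - n) := by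
          have h1 : 1 ≤ m - n := by omega
          calc 1 = 1 * 1 := by norm_num
            _ ≤ p * (m - n) := Nat.mul_le_mul (by omega) h1
        have h1 : p * (m - n) + p * n = p * m := by
          rw [← Nat.mul_add]
          congr 1
          omega
        set q : ℕ := p * (m - n) with hq
        set g : ℕ := q - 1 with hgdef
        have hsum : p * n + 1 + g = p * m := by
          have h2 : 1 + g = q := Nat.add_sub_cancel' hg1
          calc p * n + 1 + g = p * n + (1 + g) := by ring
            _ = p * n + q := by rw [h2]
            _ = p * m := by rw [← h1]; ring
        have hgz : (g : ZMod p) = -1 := by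
          have h2 : ((g + 1 : ℕ) : ZMod p) = ((q : ℕ) : ZMod p) := by
            rw [hgdef, Nat.sub_add_cancel hg1]
          rw [hq, hpn0 (m - n)] at h2
          push_cast at h2
          linear_combination h2
        have hgap2 : ‖x (p * n + 1) - x (p * n + 1 + g)‖ ≤ d + α ^ (p * n + 1) * R :=
          gap g (Or.inr hgz) (p * n + 1)
        rw [hsum] at hgap2
        have hb2 : ‖x (p * n + 1) - y m‖ ≤ d + α ^ (p * n) * R := by
          refine hgap2.trans ?_
          have : α ^ (p * n + 1) ≤ α ^ (p * n) :=
            pow_le_pow_of_le_one hα0.le hα1.le (by omega)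
          nlinarith
        have hb1 := hy1 n
        have hpar := par i (y m) (hymem m) (y n) (hymem n) (x (p * n + 1)) (hxp1mem n)
        have hn1 : (0:ℝ) ≤ ‖y m - x (p * n + 1)‖ := norm_nonneg _
        have hn2 : (0:ℝ) ≤ ‖y n - x (p * n + 1)‖ := norm_nonneg _
        have hb2' : ‖y m - x (p * n + 1)‖ ≤ d + α ^ (p * n) * R := by
          rwa [norm_sub_rev] at hb2
        nlinarith
    -- `y` is Cauchy
    have htend0 : Tendsto (fun n : ℕ => α ^ (p * n)) atTop (𝓝 0) := by
      have h1 : (fun n : ℕ => α ^ (p * n)) = fun n : ℕ => (α ^ p) ^ n := by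
        funext n; rw [← pow_mul]
      rw [h1]
      exact tendsto_pow_atTop_nhds_zero_of_lt_one hαp0.le hαple
    have hbnd : Tendsto (fun n : ℕ => 4 * (d + α ^ (p * n) * R) ^ 2 - 4 * d ^ 2) atTop (𝓝 0) := by
      have h2 : Tendsto (fun n : ℕ => 4 * (d + α ^ (p * n) * R) ^ 2 - 4 * d ^ 2) atTop
          (𝓝 (4 * (d + 0 * R) ^ 2 - 4 * d ^ 2)) := by
        exact (((htend0.mul_const R).const_add d).pow 2).const_mul 4 |>.sub_const _
      simpa using h2
    have hcauchy : CauchySeq y := by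
      rw [Metric.cauchySeq_iff']
      intro ε hε
      have hev : ∀ᶠ n : ℕ in atTop, 4 * (d + α ^ (p * n) * R) ^ 2 - 4 * d ^ 2 < ε ^ 2 := by
        have := hbnd.eventually (gt_mem_nhds (show (0:ℝ) < ε ^ 2 by positivity))
        exact this
      obtain ⟨N, hN⟩ := hev.exists
      refine ⟨N, fun n hn => ?_⟩
      have h1 := key2 N n hn
      have h2 : ‖y n - y N‖ ^ 2 < ε ^ 2 := lt_of_le_of_lt h1 hN
      have h3 : ‖y n - y N‖ < ε := by
        by_contra hcon
        push_neg at hcon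
        nlinarith [norm_nonneg (y n - y N)]
      rwa [dist_eq_norm]
    obtain ⟨v, hv⟩ := cauchySeq_tendsto_of_complete hcauchy
    have hvA : v ∈ A i := (hAcl i).mem_of_tendsto hv (Eventually.of_forall hymem)
    -- `‖v - x (p n + 1)‖ → d`
    have hvy : Tendsto (fun n : ℕ => ‖v - y n‖) atTop (𝓝 0) := by
      have h := (tendsto_const_nhds (x := v) (f := atTop (α := ℕ))).sub hv
      have h2 := h.norm
      simpa using h2
    have hc1 : Tendsto (fun n : ℕ => ‖v - x (p * n + 1)‖) atTop (𝓝 d) := by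
      have hlo : ∀ n : ℕ, d ≤ ‖v - x (p * n + 1)‖ := fun n =>
        hd_lb i v hvA _ (hxp1mem n)
      have hhi : ∀ n : ℕ, ‖v - x (p * n + 1)‖ ≤ d + (‖v - y n‖ + α ^ (p * n) * R) := by
        intro n
        calc ‖v - x (p * n + 1)‖ ≤ ‖v - y n‖ + ‖y n - x (p * n + 1)‖ := by
              have := norm_add_le (v - y n) (y n - x (p * n + 1))
              simpa using this
          _ ≤ ‖v - y n‖ + (d + α ^ (p * n) * R) := by have := hy1 n; linarith
          _ = d + (‖v - y n‖ + α ^ (p * n) * R) := by ring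
      have hup : Tendsto (fun n : ℕ => d + (‖v - y n‖ + α ^ (p * n) * R)) atTop (𝓝 d) := by
        have h2 : Tendsto (fun n : ℕ => d + (‖v - y n‖ + α ^ (p * n) * R)) atTop
            (𝓝 (d + (0 + 0 * R))) := ((hvy.add (htend0.mul_const R)).const_add d)
        simpa using h2
      exact tendsto_of_tendsto_of_tendsto_of_le_of_le tendsto_const_nhds hup hlo hhi
    -- iterate estimate
    have hiter : ∀ k n : ℕ, ‖T^[k] v - x (p * n + k + 1)‖ ≤
        α ^ k * ‖v - x (p * n + 1)‖ + (1 - α ^ k) * d := by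
      intro k n
      induction k with
      | zero => simp
      | succ k ih =>
        have h1 : T^[k] v ∈ A (i + k) := hTiter i v hvA k
        have h2 : x (p * n + k + 1) ∈ A (i + k + 1) := by
          have h := hxmem (p * n + k + 1)
          have he : i + ((p * n + k + 1 : ℕ) : ZMod p) = i + k + 1 := by
            push_cast [ZMod.natCast_self]; ring
          rwa [he] at h
        have h3 := hcontr' (i + k) _ h1 _ h2
        have hx2 : x (p * n + (k + 1) + 1) = T (x (p * n + k + 1)) := by
          rw [show p * n + (k + 1) + 1 = (p * n + k + 1) + 1 by ring, hxsucc]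
        rw [Function.iterate_succ_apply', hx2]
        calc ‖T (T^[k] v) - T (x (p * n + k + 1))‖
            ≤ α * ‖T^[k] v - x (p * n + k + 1)‖ + (1 - α) * d := h3
          _ ≤ α * (α ^ k * ‖v - x (p * n + 1)‖ + (1 - α ^ k) * d) + (1 - α) * d := by nlinarith
          _ = α ^ (k + 1) * ‖v - x (p * n + 1)‖ + (1 - α ^ (k + 1)) * d := by ring
    have hTpA : T^[p] v ∈ A i := by
      have h := hTiter i v hvA p
      have he : i + ((p : ℕ) : ZMod p) = i := by rw [ZMod.natCast_self, add_zero]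
      rwa [he] at h
    have hc2 : Tendsto (fun n : ℕ => ‖T^[p] v - x (p * (n + 1) + 1)‖) atTop (𝓝 d) := by
      have hlo : ∀ n : ℕ, d ≤ ‖T^[p] v - x (p * (n + 1) + 1)‖ := fun n =>
        hd_lb i _ hTpA _ (hxp1mem (n + 1))
      have hhi : ∀ n : ℕ, ‖T^[p] v - x (p * (n + 1) + 1)‖ ≤
          α ^ p * ‖v - x (p * n + 1)‖ + (1 - α ^ p) * d := by
        intro n
        have h := hiter p n
        rwa [show p * n + p + 1 = p * (n + 1) + 1 by ring] at h
      have hup : Tendsto (fun n : ℕ => α ^ p * ‖v - x (p * n + 1)‖ + (1 - α ^ p) * d) atTop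
          (𝓝 d) := by
        have h2 : Tendsto (fun n : ℕ => α ^ p * ‖v - x (p * n + 1)‖ + (1 - α ^ p) * d) atTop
            (𝓝 (α ^ p * d + (1 - α ^ p) * d)) := (hc1.const_mul _).add_const _
        have he : α ^ p * d + (1 - α ^ p) * d = d := by ring
        rwa [he] at h2
      exact tendsto_of_tendsto_of_tendsto_of_le_of_le tendsto_const_nhds hup hlo hhi
    have hc1' : Tendsto (fun n : ℕ => ‖v - x (p * (n + 1) + 1)‖) atTop (𝓝 d) :=
      hc1.comp (tendsto_add_atTop_nat 1)
    have hfinal : ∀ n : ℕ, ‖v - T^[p] v‖ ^ 2 ≤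
        2 * ‖v - x (p * (n + 1) + 1)‖ ^ 2 + 2 * ‖T^[p] v - x (p * (n + 1) + 1)‖ ^ 2
          - 4 * d ^ 2 := fun n =>
      par i v hvA (T^[p] v) hTpA (x (p * (n + 1) + 1)) (hxp1mem (n + 1))
    have hlim : Tendsto (fun n : ℕ =>
        2 * ‖v - x (p * (n + 1) + 1)‖ ^ 2 + 2 * ‖T^[p] v - x (p * (n + 1) + 1)‖ ^ 2
          - 4 * d ^ 2) atTop (𝓝 0) := by
      have h2 : Tendsto (fun n : ℕ =>
          2 * ‖v - x (p * (n + 1) + 1)‖ ^ 2 + 2 * ‖T^[p] v - x (p * (n + 1) + 1)‖ ^ 2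
            - 4 * d ^ 2) atTop (𝓝 (2 * d ^ 2 + 2 * d ^ 2 - 4 * d ^ 2)) :=
        (((hc1'.pow 2).const_mul 2).add ((hc2.pow 2).const_mul 2)).sub_const _
      have he : 2 * d ^ 2 + 2 * d ^ 2 - 4 * d ^ 2 = 0 := by ring
      rwa [he] at h2
    have hle0 : ‖v - T^[p] v‖ ^ 2 ≤ 0 := ge_of_tendsto hlim (Eventually.of_forall hfinal)
    have hz : ‖v - T^[p] v‖ = 0 := by
      nlinarith [norm_nonneg (v - T^[p] v), sq_nonneg ‖v - T^[p] v‖]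
    have h5 := norm_eq_zero.mp hz
    have h6 : v - T^[p] v + T^[p] v = 0 + T^[p] v := by rw [h5]
    have h7 : v = T^[p] v := by simpa using h6
    exact ⟨v, hvA, h7.symm⟩
  -- assemble
  choose v hvA hvfix using main
  have hnext : ∀ i : ZMod p, T (v i) = v (i + 1) := by
    intro i
    have h1 : T (v i) ∈ A (i + 1) := hT i (hvA i)
    have h2 : T^[p] (T (v i)) = T (v i) := by
      rw [← Function.iterate_succ_apply, Function.iterate_succ_apply', hvfix i]
    exact uniq (i + 1) (T (v i)) h1 (v (i + 1)) (hvA (i + 1)) h2 (hvfix (i + 1))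
  have hcyc : ∀ (i : ZMod p) (j : ℕ), v (i + (j : ZMod p)) = T^[j] (v i) := by
    intro i j
    induction j with
    | zero => simp
    | succ j ih =>
      have he : i + ((j : ℕ) + 1 : ℕ) = (i + j) + 1 := by push_cast; ring
      rw [he, ← hnext (i + j), ih]
      exact (Function.iterate_succ_apply' T j (v i)).symm
  refine ⟨v, fun i => ⟨hvA i, hvfix i, ?_, ?_, ?_⟩⟩
  · intro w hw hfw
    exact uniq i w hw (v i) (hvA i) hfw (hvfix i)
  · rw [hdconst i]
    exact cross i (v i) (hvA i) (v i) (hvA i) (hvfix i) (hvfix i)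
  · intro j _ _
    exact hcyc i j
end

section
/- Let H be a real Hilbert space, let p ≥ 2, let A_1, …, A_p (indices modulo p) be nonempty, bounded, closed, convex subsets of H with nonempty intersection ∩_i A_i ≠ ∅, and let T : ∪_i A_i → ∪_i A_i satisfy T(A_i) ⊆ A_{i+1}. Assume T is a p-cyclic contraction: there is α ∈ (0,1) such that ‖Tx − Ty‖ ≤ α‖x − y‖ + (1 − α)·dist(A_i, A_{i+1}) for all x ∈ A_i, y ∈ A_{i+1} and all i. Then T has a unique fixed point v, this v lies in ∩_i A_i, and v is also the unique fixed point of the restricted composite map T^p : A_i → A_i for every i. -/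
open Topology Filter

/-- Theorem 3.3 (ii): a `p`-cyclic contraction `T` on nonempty bounded closed convex subsets
with nonempty intersection has a unique fixed point `v ∈ ∩_i A_i`, which is also the unique
fixed point of the restricted composite map `T^p : A_i → A_i` for every `i`. -/
theorem cyclic_contraction_unique_fixed_point_of_intersecting
    {H : Type*} [NormedAddCommGroup H] [InnerProductSpace ℝ H] [CompleteSpace H]
    (p : ℕ) (hp : 2 ≤ p)
    (A : ZMod p → Set H)
    (hAne : ∀ i, (A i).Nonempty)
    (hAbd : ∀ i, Bornology.IsBounded (A i))
    (hAcl : ∀ i, IsClosed (A i))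
    (hAcx : ∀ i, Convex ℝ (A i))
    (hAint : (⋂ i, A i).Nonempty)
    (T : H → H)
    (hT : ∀ i, Set.MapsTo T (A i) (A (i + 1)))
    (dd : ZMod p → ℝ)
    (hdd : ∀ i, dd i = sInf {r : ℝ | ∃ u ∈ A i, ∃ w ∈ A (i + 1), r = ‖u - w‖})
    (α : ℝ) (hα0 : 0 < α) (hα1 : α < 1)
    (hcontr : ∀ i : ZMod p, ∀ x ∈ A i, ∀ y ∈ A (i + 1),
      ‖T x - T y‖ ≤ α * ‖x - y‖ + (1 - α) * dd i) :
    ∃ v : H, v ∈ ⋂ i, A i ∧ T v = v ∧ (∀ w ∈ ⋃ i, A i, T w = w → w = v) ∧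
      ∀ i : ZMod p, T^[p] v = v ∧ ∀ w ∈ A i, T^[p] w = w → w = v := by
  obtain ⟨z, hz⟩ := hAint
  have hzA : ∀ i, z ∈ A i := fun i => Set.mem_iInter.mp hz i
  -- dd i = 0
  have hdd0 : ∀ i, dd i = 0 := by
    intro i
    rw [hdd i]
    have h0mem : (0 : ℝ) ∈ {r : ℝ | ∃ u ∈ A i, ∃ w ∈ A (i + 1), r = ‖u - w‖} :=
      ⟨z, hzA i, z, hzA (i + 1), by simp⟩
    have hbdd : ∀ r ∈ {r : ℝ | ∃ u ∈ A i, ∃ w ∈ A (i + 1), r = ‖u - w‖}, (0 : ℝ) ≤ r := by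
      rintro r ⟨u, _, w, _, rfl⟩; exact norm_nonneg _
    exact le_antisymm (csInf_le ⟨0, hbdd⟩ h0mem) (le_csInf ⟨0, h0mem⟩ hbdd)
  have hc : ∀ i : ZMod p, ∀ x ∈ A i, ∀ y ∈ A (i + 1), ‖T x - T y‖ ≤ α * ‖x - y‖ := by
    intro i x hx y hy
    have := hcontr i x hx y hy
    rwa [hdd0 i, mul_zero, add_zero] at this
  -- T maps the intersection into itself
  set S : Set H := ⋂ i, A i with hS
  have hTS : Set.MapsTo T S S := by
    intro x hx
    refine Set.mem_iInter.mpr fun j => ?_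
    have := hT (j - 1) (Set.mem_iInter.mp hx (j - 1))
    simpa using this
  -- Banach fixed point on S
  have hScomplete : IsComplete S := (isClosed_iInter fun i => hAcl i).isComplete
  have hK : (⟨α, hα0.le⟩ : NNReal) < 1 := by
    exact NNReal.coe_lt_coe.mp hα1
  have hLip : LipschitzWith ⟨α, hα0.le⟩ (hTS.restrict T S S) := by
    apply LipschitzWith.of_dist_le_mul
    rintro ⟨x, hx⟩ ⟨y, hy⟩
    simp only [Set.MapsTo.restrict, Subtype.dist_eq, Subtype.map]
    rw [dist_eq_norm, dist_eq_norm]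
    exact hc 0 x (Set.mem_iInter.mp hx 0) y (Set.mem_iInter.mp hy (0+1))
  have hCW : ContractingWith ⟨α, hα0.le⟩ (hTS.restrict T S S) := ⟨hK, hLip⟩
  obtain ⟨v, hvS, hvfix, -, -⟩ :=
    hCW.exists_fixedPoint' hScomplete hTS hz (edist_ne_top _ _)
  have hvA : ∀ i, v ∈ A i := fun i => Set.mem_iInter.mp hvS i
  have hTv : T v = v := hvfix
  -- uniqueness among fixed points of T in the union
  have huniq : ∀ w ∈ ⋃ i, A i, T w = w → w = v := by
    rintro w hw hTw
    obtain ⟨_, ⟨i, rfl⟩, hwA⟩ := hw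
    have h := hc i w hwA v (hvA (i + 1))
    rw [hTw, hTv] at h
    have hnn : (0 : ℝ) ≤ ‖w - v‖ := norm_nonneg _
    have hz0 : ‖w - v‖ = 0 := le_antisymm (by nlinarith) hnn
    exact sub_eq_zero.mp (norm_eq_zero.mp hz0)
  refine ⟨v, hvS, hTv, huniq, fun i => ⟨Function.iterate_fixed hTv p, ?_⟩⟩
  intro w hwA hwp
  -- iterates contract toward v
  have key : ∀ k : ℕ, T^[k] w ∈ A (i + k) ∧ ‖T^[k] w - v‖ ≤ α ^ k * ‖w - v‖ := by
    intro k
    induction k with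
    | zero => simpa using hwA
    | succ k ih =>
      obtain ⟨hmem, hle⟩ := ih
      constructor
      · have := hT (i + k) hmem
        rw [Function.iterate_succ_apply']
        convert this using 2
        push_cast; ring
      · rw [Function.iterate_succ_apply']
        have h := hc (i + k) _ hmem v (hvA _)
        rw [hTv] at h
        calc ‖T (T^[k] w) - v‖ ≤ α * ‖T^[k] w - v‖ := h
          _ ≤ α * (α ^ k * ‖w - v‖) := by
              exact mul_le_mul_of_nonneg_left hle hα0.le
          _ = α ^ (k + 1) * ‖w - v‖ := by ring
  have hkey := (key p).2
  rw [hwp] at hkey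
  have hαp : α ^ p < 1 := pow_lt_one₀ hα0.le hα1 (by omega)
  have hnn : (0 : ℝ) ≤ ‖w - v‖ := norm_nonneg _
  have : ‖w - v‖ = 0 := by nlinarith
  have := sub_eq_zero.mp (norm_eq_zero.mp this)
  exact this
end

section
/- Let H be a real Hilbert space, D ⊆ H a convex set with nonempty interior, and f : H → ℝ strictly convex on D and Gâteaux differentiable on the interior of D with Gâteaux gradient g. Let A ⊆ interior of D be a nonempty, closed, convex set and let S : A → A be quasi-nonexpansive relative to the Bregman distance D_f, meaning that the fixed point set F(S) = {v ∈ A : Sv = v} is nonempty and D_f(v, Sx) ≤ D_f(v, x) for every v ∈ F(S) and every x ∈ A. Then F(S) is a closed and convex subset of A. -/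
open Topology Filter

lemma breg_pos {H : Type*} [NormedAddCommGroup H] [InnerProductSpace ℝ H]
    (D : Set H) (hD : Convex ℝ D) (f : H → ℝ) (g : H → H)
    (hsc : StrictConvexOn ℝ D f)
    (hgat : ∀ x ∈ interior D, ∀ v : H,
      Tendsto (fun t : ℝ => (f (x + t • v) - f x) / t) (𝓝[≠] (0 : ℝ))
        (𝓝 (inner ℝ v (g x) : ℝ)))
    {x y : H} (hx : x ∈ interior D) (hy : y ∈ D) (hne : y ≠ x) :
    (inner ℝ (y - x) (g x) : ℝ) < f y - f x := by
  set v := y - x with hv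
  have hx' : x ∈ D := interior_subset hx
  have hmid : x + (1/2 : ℝ) • v ∈ D := by
    have h := hD hx' hy (by norm_num : (0:ℝ) ≤ 1/2) (by norm_num : (0:ℝ) ≤ 1/2) (by norm_num)
    have : (1/2 : ℝ) • x + (1/2 : ℝ) • y = x + (1/2 : ℝ) • v := by
      rw [hv]; module
    rwa [this] at h
  have hstrict : f (x + (1/2 : ℝ) • v) < (1/2) * f x + (1/2) * f y := by
    have h := hsc.2 hx' hy (Ne.symm hne) (by norm_num : (0:ℝ) < 1/2) (by norm_num : (0:ℝ) < 1/2) (by norm_num)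
    have he : (1/2 : ℝ) • x + (1/2 : ℝ) • y = x + (1/2 : ℝ) • v := by rw [hv]; module
    rw [he] at h
    simpa [smul_eq_mul] using h
  -- slope monotonicity
  have hq : ∀ s ∈ Set.Ioo (0:ℝ) (1/2), (f (x + s • v) - f x)/s ≤ 2 * (f (x + (1/2:ℝ) • v) - f x) := by
    intro s hs
    obtain ⟨hs0, hs2⟩ := hs
    have hσ0 : (0:ℝ) ≤ 2 * s := by linarith
    have hσ1 : (0:ℝ) ≤ 1 - 2 * s := by linarith
    have h := hsc.convexOn.2 hx' hmid hσ1 hσ0 (by ring)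
    have he : (1 - 2*s) • x + (2*s) • (x + (1/2:ℝ) • v) = x + s • v := by module
    rw [he] at h
    rw [smul_eq_mul, smul_eq_mul] at h
    rw [div_le_iff₀ hs0]
    nlinarith [h]
  have hlim : Tendsto (fun t : ℝ => (f (x + t • v) - f x) / t) (𝓝[>] (0:ℝ))
      (𝓝 (inner ℝ v (g x) : ℝ)) :=
    (hgat x hx v).mono_left (nhdsWithin_mono _ (fun t ht => ne_of_gt ht))
  have hle : (inner ℝ v (g x) : ℝ) ≤ 2 * (f (x + (1/2:ℝ) • v) - f x) := by
    refine le_of_tendsto hlim ?_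
    filter_upwards [Ioo_mem_nhdsGT_of_mem (by norm_num : (0:ℝ) ∈ Set.Ico 0 (1/2))] with s hs
    exact hq s hs
  have hxy : x + (1:ℝ) • v = y := by rw [hv]; module
  calc (inner ℝ v (g x) : ℝ) ≤ 2 * (f (x + (1/2:ℝ) • v) - f x) := hle
    _ < 2 * ((1/2)*f x + (1/2)*f y - f x) := by linarith
    _ = f y - f x := by ring


/-- Theorem 3.4: if `S : A → A` is quasi-nonexpansive relative to the Bregman distance of a
strictly convex Gâteaux differentiable function (its fixed point set is nonempty and
`D_f(v, Sx) ≤ D_f(v, x)` for every fixed point `v` and every `x ∈ A`), with `A` a nonempty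
closed convex subset of the interior of `D`, then the fixed point set
`F(S) = {v ∈ A | S v = v}` is a closed and convex subset of `A`. -/
theorem fixedPointSet_closed_convex_of_quasiNonexpansive
    {H : Type*} [NormedAddCommGroup H] [InnerProductSpace ℝ H] [CompleteSpace H]
    (D : Set H) (hD : Convex ℝ D) (hDint : (interior D).Nonempty)
    (f : H → ℝ) (g : H → H)
    (hsc : StrictConvexOn ℝ D f)
    (hgat : ∀ x ∈ interior D, ∀ v : H,
      Tendsto (fun t : ℝ => (f (x + t • v) - f x) / t) (𝓝[≠] (0 : ℝ))
        (𝓝 (inner ℝ v (g x) : ℝ)))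
    (Df : H → H → ℝ)
    (hDf : ∀ y x : H, Df y x = f y - f x - inner ℝ (y - x) (g x))
    (A : Set H) (hAne : A.Nonempty) (hAcl : IsClosed A) (hAcx : Convex ℝ A)
    (hAD : A ⊆ interior D)
    (S : H → H) (hS : Set.MapsTo S A A)
    (hFne : ({v ∈ A | S v = v}).Nonempty)
    (hqne : ∀ v ∈ {v ∈ A | S v = v}, ∀ x ∈ A, Df v (S x) ≤ Df v x) :
    IsClosed {v ∈ A | S v = v} ∧ Convex ℝ {v ∈ A | S v = v} ∧
      {v ∈ A | S v = v} ⊆ A := by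
  have hkey : ∀ z ∈ A, Df z (S z) ≤ 0 → S z = z := by
    intro z hz hle
    by_contra hne
    have hSz : S z ∈ A := hS hz
    have hpos := breg_pos D hD f g hsc hgat (hAD hSz) (interior_subset (hAD hz))
      (Ne.symm hne)
    rw [hDf] at hle
    linarith
  refine ⟨?_, ?_, fun v hv => hv.1⟩
  · refine IsSeqClosed.isClosed ?_
    intro u v hu huv
    have hv : v ∈ A := hAcl.isSeqClosed (fun n => (hu n).1) huv
    refine ⟨hv, hkey v hv ?_⟩
    have hSv : S v ∈ A := hS hv
    have hineq : ∀ n : ℕ, f v - f (S v) - inner ℝ (u n - S v) (g (S v)) + (inner ℝ (u n - v) (g v) : ℝ)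
        ≤ 0 := by
      intro n
      have h := hqne (u n) (hu n) v hv
      rw [hDf, hDf] at h
      linarith
    have hlim : Tendsto (fun n => f v - f (S v) - inner ℝ (u n - S v) (g (S v))
        + (inner ℝ (u n - v) (g v) : ℝ)) atTop
        (𝓝 (f v - f (S v) - inner ℝ (v - S v) (g (S v)) + inner ℝ (v - v) (g v))) := by
      refine Tendsto.add (Tendsto.sub tendsto_const_nhds ?_) ?_
      · exact ((continuous_inner.comp ((continuous_id.sub continuous_const).prodMk
          continuous_const)).tendsto v).comp huv
      · exact ((continuous_inner.comp ((continuous_id.sub continuous_const).prodMk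
          continuous_const)).tendsto v).comp huv
    have hfin : f v - f (S v) - inner ℝ (v - S v) (g (S v)) + (inner ℝ (v - v) (g v) : ℝ) ≤ 0 :=
      le_of_tendsto hlim (Eventually.of_forall hineq)
    rw [hDf]
    simp only [sub_self, inner_zero_left] at hfin
    linarith
  · intro p hp q hq a b ha hb hab
    rcases eq_or_lt_of_le ha with ha0 | ha
    · have hb1 : b = 1 := by linarith
      simpa [← ha0, hb1] using hq
    rcases eq_or_lt_of_le hb with hb0 | hb
    · have ha1 : a = 1 := by linarith
      simpa [← hb0, ha1] using hp
    set z := a • p + b • q with hz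
    have hzA : z ∈ A := hAcx hp.1 hq.1 ha.le hb.le hab
    have hSzA : S z ∈ A := hS hzA
    refine ⟨hzA, hkey z hzA ?_⟩
    have h1 := hqne p hp z hzA
    have h2 := hqne q hq z hzA
    rw [hDf, hDf] at h1 h2
    have e1 : (inner ℝ (z - S z) (g (S z)) : ℝ)
        = a * inner ℝ (p - S z) (g (S z)) + b * inner ℝ (q - S z) (g (S z)) := by
      have hzz : z - S z = a • (p - S z) + b • (q - S z) := by
        have h' : a • (p - S z) + b • (q - S z) = a • p + b • q - (a + b) • S z := by module
        rw [hz, h', hab, one_smul]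
      rw [hzz, inner_add_left, real_inner_smul_left, real_inner_smul_left]
    have e2 : (0:ℝ) = a * inner ℝ (p - z) (g z) + b * inner ℝ (q - z) (g z) := by
      have hzz : (0:H) = a • (p - z) + b • (q - z) := by
        have h' : a • (p - z) + b • (q - z) = a • p + b • q - (a + b) • z := by module
        rw [h', hab, one_smul, hz, sub_self]
      rw [← inner_zero_left (g z), hzz, inner_add_left, real_inner_smul_left,
        real_inner_smul_left]
    rw [hDf, e1]
    have c1 : a * f (S z) + b * f (S z) = f (S z) := by rw [← add_mul, hab, one_mul]
    have c2 : a * f z + b * f z = f z := by rw [← add_mul, hab, one_mul]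
    nlinarith [mul_le_mul_of_nonneg_left h1 ha.le, mul_le_mul_of_nonneg_left h2 hb.le, e2, c1, c2]
end
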